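/- arXiv:1805.01207 — 10 statements merged into one kernel-verified Lean document; each statement's English description precedes it below -/
import Mathlib

section
/- For a multiplicative hom-associative algebra (A, μ, α), the Hochschild-type coboundary operator δ_α satisfies δ_α² = 0 on the cochain complex C•_α(A,A). -/
/-- Reindex a tuple along an equality of lengths. -/
def reindex {A : Type*} {p q : ℕ} (h : q = p) (a : Fin p → A) : Fin q → A :=
  fun k => a (Fin.cast h k)

/-- `f` commutes with `α`, i.e. `α ∘ f = f ∘ α^{⊗n}` (membership condition for `Cⁿ_α`/`V^α`). -/
def IsCompat {A : Type*} (α : A → A) {n : ℕ} (f : (Fin n → A) → A) : Prop :=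
  ∀ a : Fin n → A, α (f a) = f fun i => α (a i)

/-- The α-twisted Hochschild coboundary on `n`-cochains. -/
def homDelta {A : Type*} [AddCommGroup A] (μ : A → A → A) (α : A → A) (n : ℕ)
    (f : (Fin n → A) → A) : (Fin (n + 1) → A) → A := fun a =>
  μ (α^[n - 1] (a 0)) (f fun i => a i.succ)
    + ∑ i : Fin n, ((-1 : ℤ) ^ ((i : ℕ) + 1)) •
        f (fun j => if (j : ℕ) < (i : ℕ) then α (a j.castSucc)
          else if (j : ℕ) = (i : ℕ) then μ (a j.castSucc) (a j.succ)
          else α (a j.succ))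
    + ((-1 : ℤ) ^ (n + 1)) • μ (f fun i => a i.castSucc) (α^[n - 1] (a (Fin.last n)))

/-- The α-twisted insertion `f ∘ᵢ g` for `f ∈ V^α_m`, `g ∈ V^α_n`. -/
def circI {A : Type*} (α : A → A) {m n : ℕ} (i : Fin (m + 1))
    (f : (Fin (m + 1) → A) → A) (g : (Fin (n + 1) → A) → A) :
    (Fin (m + n + 1) → A) → A := fun a =>
  f fun k => if (k : ℕ) < (i : ℕ) then α^[n] (a ⟨(k : ℕ), by omega⟩)
    else if (k : ℕ) = (i : ℕ) then g (fun l => a ⟨(i : ℕ) + (l : ℕ), by omega⟩)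
    else α^[n] (a ⟨(k : ℕ) + n, by omega⟩)

/-- The α-twisted pre-Lie product `f ∘ g = Σᵢ (-1)^{ni} f ∘ᵢ g`. -/
def vcirc {A : Type*} [AddCommGroup A] (α : A → A) {m n : ℕ}
    (f : (Fin (m + 1) → A) → A) (g : (Fin (n + 1) → A) → A) :
    (Fin (m + n + 1) → A) → A := fun a =>
  ∑ i : Fin (m + 1), ((-1 : ℤ) ^ (n * (i : ℕ))) • circI α i f g a

/-- The graded (Gerstenhaber) bracket `[f,g] = f ∘ g - (-1)^{mn} g ∘ f` on `⊕ V^α_m`. -/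
def vbracket {A : Type*} [AddCommGroup A] (α : A → A) {m n : ℕ}
    (f : (Fin (m + 1) → A) → A) (g : (Fin (n + 1) → A) → A) :
    (Fin (m + n + 1) → A) → A := fun a =>
  vcirc α f g a - ((-1 : ℤ) ^ (m * n)) • vcirc α g f (reindex (by omega) a)

/-- The cup product of an `(m+1)`-cochain and an `(n+1)`-cochain. -/
def cupProd {A : Type*} (μ : A → A → A) (α : A → A) {m n : ℕ}
    (f : (Fin (m + 1) → A) → A) (g : (Fin (n + 1) → A) → A) :
    (Fin (m + n + 2) → A) → A := fun a =>
  μ (α^[n] (f fun i => a ⟨(i : ℕ), by omega⟩))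
    (α^[m] (g fun i => a ⟨m + 1 + (i : ℕ), by omega⟩))

def dface {A : Type*} (μ : A → A → A) (α : A → A) (N : ℕ) (i : ℕ)
    (f : (Fin N → A) → A) : (Fin (N + 1) → A) → A := fun a =>
  if i = 0 then μ (α^[N - 1] (a 0)) (f fun k => a k.succ)
  else if i = N + 1 then μ (f fun k => a k.castSucc) (α^[N - 1] (a (Fin.last N)))
  else f fun j => if (j : ℕ) < i - 1 then α (a j.castSucc)
    else if (j : ℕ) = i - 1 then μ (a j.castSucc) (a j.succ)
    else α (a j.succ)

lemma dface_zero {A : Type*} (μ : A → A → A) (α : A → A) (N : ℕ)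
    (f : (Fin N → A) → A) (a : Fin (N + 1) → A) :
    dface μ α N 0 f a = μ (α^[N - 1] (a 0)) (f fun k => a k.succ) := by simp [dface]

lemma dface_last {A : Type*} (μ : A → A → A) (α : A → A) (N i : ℕ) (h : i = N + 1)
    (f : (Fin N → A) → A) (a : Fin (N + 1) → A) :
    dface μ α N i f a
      = μ (f fun k => a k.castSucc) (α^[N - 1] (a (Fin.last N))) := by subst h; simp [dface]

lemma dface_mid {A : Type*} (μ : A → A → A) (α : A → A) (N i : ℕ)
    (h0 : i ≠ 0) (h1 : i ≠ N + 1)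
    (f : (Fin N → A) → A) (a : Fin (N + 1) → A) :
    dface μ α N i f a
      = f fun j => if (j : ℕ) < i - 1 then α (a j.castSucc)
          else if (j : ℕ) = i - 1 then μ (a j.castSucc) (a j.succ)
          else α (a j.succ) := by simp [dface, h0, h1]

lemma hmult_iter {A : Type*} {μ : A → A → A} {α : A → A}
    (hmult : ∀ a b : A, α (μ a b) = μ (α a) (α b)) (k : ℕ) (x y : A) :
    α^[k] (μ x y) = μ (α^[k] x) (α^[k] y) := by
  induction k with
  | zero => rfl
  | succ m ih => rw [Function.iterate_succ_apply', ih, hmult,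
      Function.iterate_succ_apply', Function.iterate_succ_apply']

lemma lemC {A : Type*} (μ : A → A → A) (α : A → A)
    (hassoc : ∀ a b c : A, μ (α a) (μ b c) = μ (μ a b) (α c))
    (hmult : ∀ a b : A, α (μ a b) = μ (α a) (α b))
    (N : ℕ) (hN : 1 ≤ N) (f : (Fin N → A) → A) (hf : IsCompat α f)
    (i j : ℕ) (hji : j < i) (hi : i ≤ N + 2) (hj : j ≤ N + 1)
    (a : Fin (N + 2) → A) :
    dface μ α (N + 1) i (dface μ α N j f) a
      = dface μ α (N + 1) j (dface μ α N (i - 1) f) a := by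
  obtain ⟨M, rfl⟩ : ∃ M, N = M + 1 := ⟨N - 1, by omega⟩
  obtain rfl | hj0 : j = 0 ∨ 1 ≤ j := by omega
  · obtain rfl | hcase : i = 1 ∨ 2 ≤ i := by omega
    · -- case (a) : d^1 d^0 = d^0 d^0
      rw [dface_mid μ α (M + 2) 1 one_ne_zero (by omega), dface_zero, dface_zero, dface_zero]
      simp only [Fin.val_zero, Fin.val_succ, Nat.lt_irrefl, if_false, if_true, Nat.sub_self,
        Nat.add_sub_cancel, Nat.add_sub_cancel_left]
      rw [hmult_iter hmult, Function.iterate_succ_apply', hassoc, hf]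
      simp
    · obtain rfl | hi2 : i = M + 3 ∨ i ≤ M + 2 := by omega
      · -- case (c) : d^{N+2} d^0 = d^0 d^{N+1}
        rw [dface_last μ α (M + 2) (M + 3) (by omega), dface_zero, dface_zero,
          dface_last μ α (M + 1) (M + 3 - 1) (by omega)]
        simp only [Nat.add_sub_cancel]
        conv_rhs => rw [Function.iterate_succ_apply' α M (a 0), hassoc]
        simp only [show M + 2 - 1 = M + 1 by omega]
        rw [Function.iterate_succ_apply' α M]
        simp [Fin.succ_castSucc, -Fin.castSucc_succ]
      · -- case (b) : d^i d^0 = d^0 d^{i-1}, 2 ≤ i ≤ N+1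
        rw [dface_mid μ α (M + 2) i (by omega) (by omega), dface_zero, dface_zero,
          dface_mid μ α (M + 1) (i - 1) (by omega) (by omega)]
        simp only [Nat.add_sub_cancel, Fin.val_zero, Fin.val_succ, Fin.castSucc_zero]
        simp only [show (0:ℕ) < i - 1 by omega, ↓reduceIte]
        rw [← Function.iterate_succ_apply α M (a 0)]
        refine congrArg _ (congrArg f (funext fun k => ?_))
        have hk := k.isLt
        split_ifs <;> first | rfl | (exfalso; omega) | simp [Fin.succ_castSucc, -Fin.castSucc_succ]
  · obtain rfl | hjN : j = M + 2 ∨ j ≤ M + 1 := by omega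
    · -- case (g) : j = N+1, i = N+2
      obtain rfl : i = M + 3 := by omega
      rw [dface_last μ α (M + 2) (M + 3) (by omega),
        dface_last μ α (M + 1) (M + 2) (by omega),
        dface_mid μ α (M + 2) (M + 2) (by omega) (by omega),
        dface_last μ α (M + 1) (M + 3 - 1) (by omega)]
      simp only [Nat.add_sub_cancel, show M + 2 - 1 = M + 1 by omega, Fin.coe_castSucc,
        Fin.val_last, Fin.is_lt, if_true, lt_irrefl, if_false, if_pos rfl]
      rw [hmult_iter hmult, ← hf]
      conv_rhs => rw [hassoc]
      rw [← Function.iterate_succ_apply' α M]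
      simp [Fin.succ_last]
    · obtain rfl | hi2 : i = M + 3 ∨ i ≤ M + 2 := by omega
      · -- case (f) : 1 ≤ j ≤ N, i = N+2
        rw [dface_last μ α (M + 2) (M + 3) (by omega),
          dface_mid μ α (M + 1) j (by omega) (by omega),
          dface_mid μ α (M + 2) j (by omega) (by omega),
          dface_last μ α (M + 1) (M + 3 - 1) (by omega)]
        simp only [Nat.add_sub_cancel, show M + 2 - 1 = M + 1 by omega, Fin.coe_castSucc,
          Fin.val_last]
        rw [if_neg (show ¬ (M + 1 < j - 1) by omega), if_neg (show ¬ (M + 1 = j - 1) by omega),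
          ← Function.iterate_succ_apply α M]
        congr 1
      · -- cases (d),(e) : interior faces
        rw [dface_mid μ α (M + 2) i (by omega) (by omega),
          dface_mid μ α (M + 1) j (by omega) (by omega),
          dface_mid μ α (M + 2) j (by omega) (by omega),
          dface_mid μ α (M + 1) (i - 1) (by omega) (by omega)]
        refine congrArg f (funext fun k => ?_)
        have hk := k.isLt
        simp only [Fin.coe_castSucc, Fin.val_succ]
        split_ifs <;>
          first | rfl | (exfalso; omega) | exact hmult _ _ | exact (hmult _ _).symm |
            exact hassoc _ _ _


lemma lemA {A : Type*} [AddCommGroup A] (μ : A → A → A) (α : A → A) (N : ℕ)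
    (f : (Fin N → A) → A) (a : Fin (N + 1) → A) :
    homDelta μ α N f a = ∑ i ∈ Finset.range (N + 2), ((-1 : ℤ) ^ i) • dface μ α N i f a := by
  rw [Finset.sum_range_succ, Finset.sum_range_succ']
  have h1 : ∀ i ∈ Finset.range N, ((-1 : ℤ) ^ (i + 1)) • dface μ α N (i + 1) f a
      = ((-1 : ℤ) ^ (i + 1)) •
        f (fun j => if (j : ℕ) < i then α (a j.castSucc)
          else if (j : ℕ) = i then μ (a j.castSucc) (a j.succ)
          else α (a j.succ)) := by
    intro i hi
    simp only [Finset.mem_range] at hi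
    simp [dface, show i + 1 ≠ N + 1 by omega, show i ≠ N by omega, Nat.add_sub_cancel]
  rw [Finset.sum_congr rfl h1]
  simp only [homDelta, dface, if_neg (show N + 1 ≠ 0 by omega), if_true, ite_true, eq_self_iff_true,
    pow_zero, one_smul, reduceIte]
  rw [Fin.sum_univ_eq_sum_range (fun i => ((-1 : ℤ) ^ (i + 1)) •
        f (fun j => if (j : ℕ) < i then α (a j.castSucc)
          else if (j : ℕ) = i then μ (a j.castSucc) (a j.succ)
          else α (a j.succ)))]
  abel

lemma lemB {K : Type*} [Field K] {A : Type*} [AddCommGroup A] [Module K A]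
    (μ : A →ₗ[K] A →ₗ[K] A) (α : A → A) (N i : ℕ) {ι : Type*} (s : Finset ι)
    (c : ι → ℤ) (F : ι → (Fin N → A) → A) (a : Fin (N + 1) → A) :
    dface (fun x y => μ x y) α N i (fun b => ∑ j ∈ s, c j • F j b) a
      = ∑ j ∈ s, c j • dface (fun x y => μ x y) α N i (F j) a := by
  unfold dface
  split_ifs with h1 h2
  · simp [map_sum, map_zsmul]
  · simp only []
    rw [show (μ (∑ j ∈ s, c j • F j fun k => a k.castSucc)) (α^[N-1] (a (Fin.last N)))
        = (μ.flip (α^[N-1] (a (Fin.last N)))) (∑ j ∈ s, c j • F j fun k => a k.castSucc) from rfl]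
    simp [map_sum, map_zsmul]
  · rfl



/-- For a multiplicative hom-associative algebra `(A, μ, α)`, the α-twisted Hochschild
coboundary satisfies `δ_α² = 0` on the cochain complex `C•_α(A,A)`. -/
theorem homDelta_squared_eq_zero
    {K : Type*} [Field K] [CharZero K] {A : Type*} [AddCommGroup A] [Module K A]
    (μ : A →ₗ[K] A →ₗ[K] A) (α : A →ₗ[K] A)
    (hassoc : ∀ a b c : A, μ (α a) (μ b c) = μ (μ a b) (α c))
    (hmult : ∀ a b : A, α (μ a b) = μ (α a) (α b))
    (n : ℕ) (f : MultilinearMap K (fun _ : Fin (n + 1) => A) A)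
    (hf : IsCompat (⇑α) (⇑f)) :
    ∀ a : Fin (n + 3) → A,
      homDelta (fun x y => μ x y) (⇑α) (n + 2)
        (homDelta (fun x y => μ x y) (⇑α) (n + 1) (⇑f)) a = 0 := by
  intro a
  have hg : homDelta (fun x y => μ x y) (⇑α) (n + 1) (⇑f)
      = fun b => ∑ j ∈ Finset.range (n + 3),
          ((-1 : ℤ) ^ j) • dface (fun x y => μ x y) (⇑α) (n + 1) j (⇑f) b :=
    funext fun b => lemA _ _ _ _ b
  rw [lemA (fun x y => μ x y) (⇑α) (n + 2) _ a, hg]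
  have hB : ∀ i ∈ Finset.range (n + 4),
      ((-1 : ℤ) ^ i) • dface (fun x y => μ x y) (⇑α) (n + 2) i
        (fun b => ∑ j ∈ Finset.range (n + 3),
          ((-1 : ℤ) ^ j) • dface (fun x y => μ x y) (⇑α) (n + 1) j (⇑f) b) a
      = ∑ j ∈ Finset.range (n + 3), ((-1 : ℤ) ^ (i + j)) •
          dface (fun x y => μ x y) (⇑α) (n + 2) i
            (dface (fun x y => μ x y) (⇑α) (n + 1) j (⇑f)) a := by
    intro i _
    rw [lemB μ (⇑α) (n + 2) i (Finset.range (n + 3)) (fun j => (-1 : ℤ) ^ j)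
      (fun j => dface (fun x y => μ x y) (⇑α) (n + 1) j (⇑f)) a,
      Finset.smul_sum]
    exact Finset.sum_congr rfl fun j _ => by rw [smul_smul, ← pow_add]
  rw [Finset.sum_congr rfl hB, ← Finset.sum_product']
  refine Finset.sum_involution
    (fun p _ => if p.2 < p.1 then (p.2, p.1 - 1) else (p.2 + 1, p.1)) ?_ ?_ ?_ ?_
  · rintro ⟨i, j⟩ hp
    simp only [Finset.mem_product, Finset.mem_range] at hp
    by_cases h : j < i
    · simp only [h, if_pos]
      have hT : dface (fun x y => μ x y) (⇑α) (n + 2) i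
            (dface (fun x y => μ x y) (⇑α) (n + 1) j (⇑f)) a
          = dface (fun x y => μ x y) (⇑α) (n + 2) j
            (dface (fun x y => μ x y) (⇑α) (n + 1) (i - 1) (⇑f)) a :=
        lemC _ _ hassoc hmult (n + 1) (by omega) _ hf i j h (by omega) (by omega) a
      rw [hT, ← add_smul, show i + j = (j + (i - 1)) + 1 by omega, pow_succ]
      ring_nf
      simp
    · simp only [h, if_neg, if_false]
      have hT : dface (fun x y => μ x y) (⇑α) (n + 2) (j + 1)
            (dface (fun x y => μ x y) (⇑α) (n + 1) i (⇑f)) a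
          = dface (fun x y => μ x y) (⇑α) (n + 2) i
            (dface (fun x y => μ x y) (⇑α) (n + 1) (j + 1 - 1) (⇑f)) a :=
        lemC _ _ hassoc hmult (n + 1) (by omega) _ hf (j + 1) i (by omega) (by omega)
          (by omega) a
      rw [show j + 1 - 1 = j from rfl] at hT
      rw [← hT, ← add_smul, show (j + 1) + i = (i + j) + 1 by omega, pow_succ]
      ring_nf
      simp
  · rintro ⟨i, j⟩ hp _
    by_cases h : j < i <;> simp [h, Prod.ext_iff] <;> omega
  · rintro ⟨i, j⟩ hp
    simp only [Finset.mem_product, Finset.mem_range] at hp ⊢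
    by_cases h : j < i <;> simp [h] <;> omega
  · rintro ⟨i, j⟩ hp
    by_cases h : j < i
    · simp only [h, if_pos]
      have : ¬ (i - 1 < j) := by omega
      simp only [this, if_neg, if_false]
      exact Prod.ext (by omega) rfl
    · simp only [h, if_neg, if_false]
      have : i < j + 1 := by omega
      simp only [this, if_pos]
      exact Prod.ext rfl (by omega)
end

section
/- For f ∈ V^α_m, g ∈ V^α_n, h ∈ V^α_p and 0 ≤ j ≤ i-1 ≤ m-1, one has (f ∘ᵢ g) ∘ⱼ h = (f ∘ⱼ h) ∘_{i+p} g, where ∘ᵢ is the α-twisted insertion operation. -/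
lemma IsCompat.iterate {A : Type*} {α : A → A} {n : ℕ} {f : (Fin n → A) → A}
    (hf : IsCompat α f) (N : ℕ) (a : Fin n → A) :
    α^[N] (f a) = f fun i => α^[N] (a i) := by
  induction N generalizing a with
  | zero => simp
  | succ N ih =>
    rw [Function.iterate_succ_apply', ih, hf]
    simp [Function.iterate_succ_apply']

/-- Pre-Lie system identity, first case: for `f ∈ V^α_m`, `g ∈ V^α_n`, `h ∈ V^α_p`
and `0 ≤ j ≤ i - 1 ≤ m - 1`, one has `(f ∘ᵢ g) ∘ⱼ h = (f ∘ⱼ h) ∘_{i+p} g`. -/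
theorem circI_preLie_first
    {K : Type*} [Field K] [CharZero K] {A : Type*} [AddCommGroup A] [Module K A]
    (α : A →ₗ[K] A) (m n p : ℕ)
    (f : MultilinearMap K (fun _ : Fin (m + 1) => A) A)
    (g : MultilinearMap K (fun _ : Fin (n + 1) => A) A)
    (h : MultilinearMap K (fun _ : Fin (p + 1) => A) A)
    (hf : IsCompat (⇑α) (⇑f)) (hg : IsCompat (⇑α) (⇑g)) (hh : IsCompat (⇑α) (⇑h))
    (i j : ℕ) (hji : j < i) (him : i ≤ m) :
    ∀ a : Fin (m + n + p + 1) → A,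
      circI (⇑α) (⟨j, by omega⟩ : Fin (m + n + 1))
          (circI (⇑α) (⟨i, by omega⟩ : Fin (m + 1)) (⇑f) (⇑g)) (⇑h) a
      = circI (⇑α) (⟨i + p, by omega⟩ : Fin (m + p + 1))
          (circI (⇑α) (⟨j, by omega⟩ : Fin (m + 1)) (⇑f) (⇑h)) (⇑g)
          (reindex (by omega) a) := by
  intro a
  unfold circI reindex
  congr 1
  funext k
  rcases k with ⟨k, hk⟩
  simp only [Fin.cast_mk]
  by_cases h1 : k < j
  · have h2 : k < i := by omega
    have h3 : k < i + p := by omega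
    simp only [h1, h2, h3, if_pos, if_true]
    rw [← Function.iterate_add_apply, ← Function.iterate_add_apply]
    ring_nf
  · by_cases h2 : k = j
    · subst h2
      have h3 : k < i := by omega
      simp only [h1, h3, if_pos, if_neg, if_true, lt_irrefl, if_false]
      rw [hh.iterate]
      congr 1
      funext l
      have h4 : k + (l : ℕ) < i + p := by omega
      simp [h4]
    · by_cases h3 : k < i
      · have h4 : j < k := by omega
        have h5 : k + p < i + p := by omega
        have h6 : ¬ (k + p < j) := by omega
        have h7 : ¬ (k + p = j) := by omega
        simp only [h1, h2, h3, h5, h6, h7, if_true, if_false, if_pos, if_neg]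
        rw [← Function.iterate_add_apply, ← Function.iterate_add_apply]
        ring_nf
      · by_cases h4 : k = i
        · subst h4
          have h5 : ¬ (k + p < j) := by omega
          have h6 : ¬ (k + p = j) := by omega
          simp only [h1, h2, h3, h5, h6, lt_self_iff_false, if_false, if_neg, if_pos,
            if_true, ite_true, ite_false]
          rw [hg.iterate]
          congr 1
          funext l
          have h9 : ¬ (k + (l : ℕ) < j) := by omega
          have h10 : ¬ (k + (l : ℕ) = j) := by omega
          simp only [h9, h10, if_false, if_neg]
          have h11 : k + (l : ℕ) + p = k + p + (l : ℕ) := by omega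
          simp only [h11]
        · have h5 : ¬ (k + n < j) := by omega
          have h6 : ¬ (k + n = j) := by omega
          have h7 : ¬ (k + p < i + p) := by omega
          have h8 : ¬ (k + p = i + p) := by omega
          simp only [h1, h2, h3, h4, h5, h6, h7, h8, if_false, if_neg]
          rw [← Function.iterate_add_apply, ← Function.iterate_add_apply]
          have : k + n + p = k + p + n := by omega
          simp only [this, Nat.add_comm n p]
end

section
/- For f ∈ V^α_m, g ∈ V^α_n, h ∈ V^α_p and i ≤ j ≤ n+i, one has (f ∘ᵢ g) ∘ⱼ h = f ∘ᵢ (g ∘_{j-i} h), where ∘ᵢ is the α-twisted insertion operation. -/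
/-- Pre-Lie system identity, second case: for `f ∈ V^α_m`, `g ∈ V^α_n`, `h ∈ V^α_p`
and `i ≤ j ≤ n + i`, one has `(f ∘ᵢ g) ∘ⱼ h = f ∘ᵢ (g ∘_{j-i} h)`. -/
theorem circI_preLie_second
    {K : Type*} [Field K] [CharZero K] {A : Type*} [AddCommGroup A] [Module K A]
    (α : A →ₗ[K] A) (m n p : ℕ)
    (f : MultilinearMap K (fun _ : Fin (m + 1) => A) A)
    (g : MultilinearMap K (fun _ : Fin (n + 1) => A) A)
    (h : MultilinearMap K (fun _ : Fin (p + 1) => A) A)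
    (hf : IsCompat (⇑α) (⇑f)) (hg : IsCompat (⇑α) (⇑g)) (hh : IsCompat (⇑α) (⇑h))
    (i j : ℕ) (hij : i ≤ j) (hjn : j ≤ n + i) (him : i ≤ m) :
    ∀ a : Fin (m + n + p + 1) → A,
      circI (⇑α) (⟨j, by omega⟩ : Fin (m + n + 1))
          (circI (⇑α) (⟨i, by omega⟩ : Fin (m + 1)) (⇑f) (⇑g)) (⇑h) a
      = circI (⇑α) (⟨i, by omega⟩ : Fin (m + 1)) (⇑f)
          (circI (⇑α) (⟨j - i, by omega⟩ : Fin (n + 1)) (⇑g) (⇑h))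
          (reindex (by omega) a) := by
  intro a
  simp only [circI, reindex, Fin.cast, Fin.coe_cast]
  congr 1
  funext k
  rcases lt_trichotomy (k : ℕ) i with hk | hk | hk
  · rw [if_pos hk, if_pos hk, if_pos (show (k:ℕ) < j by omega)]
    rw [← Function.iterate_add_apply]
  · rw [if_neg (by omega), if_pos hk, if_neg (by omega), if_pos hk]
    congr 1
    funext l
    rcases lt_trichotomy (l : ℕ) (j - i) with hl | hl | hl
    · rw [if_pos (by omega : i + (l:ℕ) < j), if_pos hl]
    · rw [if_neg (by omega), if_pos (by omega : i + (l:ℕ) = j), if_neg (by omega),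
        if_pos hl]
      congr 1
      funext r
      exact congrArg a (Fin.ext (by simp; omega))
    · rw [if_neg (by omega), if_neg (by omega), if_neg (by omega), if_neg (by omega)]
      exact congrArg _ (congrArg a (Fin.ext (by simp; omega)))
  · rw [if_neg (by omega), if_neg (by omega), if_neg (by omega), if_neg (by omega),
      if_neg (by omega), if_neg (by omega)]
    rw [← Function.iterate_add_apply]
    exact congrArg _ (congrArg a (Fin.ext (by simp; omega)))
end

section
/- The α-twisted insertion operations make {V^α_m, ∘ᵢ} a pre-Lie system; consequently, the operation f ∘ g = Σ_{i=0}^{m} (-1)^{ni} f ∘ᵢ g makes ⊕_m V^α_m a graded pre-Lie algebra: for f ∈ V^α_m, g ∈ V^α_n, h ∈ V^α_p, (f ∘ g) ∘ h - f ∘ (g ∘ h) = (-1)^{np} [ (f ∘ h) ∘ g - f ∘ (h ∘ g) ]. -/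
section PreLieAux
open Finset

lemma iterCompat {A : Type*} {α : A → A} {n : ℕ} {f : (Fin n → A) → A}
    (hf : IsCompat α f) (k : ℕ) (a : Fin n → A) :
    α^[k] (f a) = f (fun i => α^[k] (a i)) := by
  induction k generalizing a with
  | zero => simp
  | succ k ih =>
      rw [Function.iterate_succ_apply', ih, hf]
      congr 1
      funext i
      rw [Function.iterate_succ_apply']

lemma acongr {A : Type*} {N : ℕ} (a : Fin N → A) {x y : ℕ} {hx : x < N} {hy : y < N}
    (h : x = y) : a ⟨x, hx⟩ = a ⟨y, hy⟩ := by subst h; rfl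

lemma nested {A : Type*} (α : A → A) {m n p : ℕ}
    (f : (Fin (m + 1) → A) → A) (g : (Fin (n + 1) → A) → A) (h : (Fin (p + 1) → A) → A)
    (i t : ℕ) (hi : i ≤ m) (ht : t ≤ n) (a : Fin (m + n + p + 1) → A) :
    circI α ⟨i + t, by omega⟩ (circI α ⟨i, by omega⟩ f g) h a
      = circI α ⟨i, by omega⟩ f (circI α ⟨t, by omega⟩ g h) (reindex (by omega) a) := by
  simp only [circI, reindex]
  congr 1
  funext k
  rcases k with ⟨k, hk⟩
  simp only [Fin.cast, Fin.mk.injEq]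
  split_ifs <;> try omega
  · rw [← Function.iterate_add_apply]
  · congr 1
    funext l
    rcases l with ⟨l, hl⟩
    simp only []
    split_ifs <;> try omega
    · exact congrArg _ (acongr a (by omega))
    · congr 1
      funext s
      exact acongr a (by omega)
    · exact congrArg _ (acongr a (by omega))
  · rw [← Function.iterate_add_apply]
    exact congrArg _ (acongr a (by omega))

lemma itercomm {A : Type*} (α : A → A) (n p : ℕ) {N : ℕ} (a : Fin N → A) {x y : ℕ}
    {hx : x < N} {hy : y < N} (h : x = y) :
    α^[n] (α^[p] (a ⟨x, hx⟩)) = α^[p] (α^[n] (a ⟨y, hy⟩)) := by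
  subst h
  rw [← Function.iterate_add_apply, ← Function.iterate_add_apply, Nat.add_comm]

lemma disjoint_swap {A : Type*} (α : A → A) {m n p : ℕ}
    (f : (Fin (m + 1) → A) → A) (g : (Fin (n + 1) → A) → A) (h : (Fin (p + 1) → A) → A)
    (hg : IsCompat α g) (hh : IsCompat α h)
    (i j : ℕ) (hi : i ≤ m) (hj : j < i) (a : Fin (m + n + p + 1) → A) :
    circI α ⟨j, by omega⟩ (circI α ⟨i, by omega⟩ f g) h a
      = circI α ⟨i + p, by omega⟩ (circI α ⟨j, by omega⟩ f h) g (reindex (by omega) a) := by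
  simp only [circI, reindex]
  congr 1
  funext k
  rcases k with ⟨k, hk⟩
  simp only [Fin.cast, Fin.mk.injEq]
  split_ifs <;> try omega
  · exact itercomm α n p a rfl
  · rw [iterCompat hh n]
    congr 1
    funext l
    rcases l with ⟨l, hl⟩
    simp only []
    split_ifs <;> try omega
    exact congrArg _ (acongr a (by omega))
  · exact itercomm α n p a (by omega)
  · rw [iterCompat hg p]
    congr 1
    funext l
    rcases l with ⟨l, hl⟩
    simp only []
    split_ifs <;> try omega
    exact congrArg _ (acongr a (by omega))
  · exact itercomm α n p a (by omega)

lemma npow_two_mul_add (k x : ℕ) : (-1:ℤ)^(2*k+x) = (-1)^x := by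
  rw [pow_add, pow_mul, neg_one_sq, one_pow, one_mul]

lemma core {A : Type*} [AddCommGroup A] (m n p : ℕ)
    (X Y NG NH : ℕ → ℕ → A)
    (hmid : ∀ i t, i ≤ m → t ≤ n → X i (i + t) = NG i t)
    (hmid' : ∀ i t, i ≤ m → t ≤ p → Y i (i + t) = NH i t)
    (hlow : ∀ i j, i ≤ m → j < i → X i j = Y j (i + p))
    (hhigh : ∀ i j, i ≤ m → i + n < j → j ≤ m + n → X i j = Y (j - n) i) :
    (∑ j ∈ range (m+n+1), ∑ i ∈ range (m+1), ((-1:ℤ)^(p*j+n*i)) • X i j)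
      - (∑ i ∈ range (m+1), ∑ t ∈ range (n+1), ((-1:ℤ)^((n+p)*i+p*t)) • NG i t)
    = ((-1:ℤ)^(n*p)) • (
      (∑ j ∈ range (m+p+1), ∑ i ∈ range (m+1), ((-1:ℤ)^(n*j+p*i)) • Y i j)
        - (∑ i ∈ range (m+1), ∑ t ∈ range (p+1), ((-1:ℤ)^((p+n)*i+n*t)) • NH i t)) := by
  -- generic three-way split of the double sum
  have split : ∀ (n' : ℕ) (Z : ℕ → ℕ → A) (c : ℕ → ℕ → ℤ),
      (∑ j ∈ range (m+n'+1), ∑ i ∈ range (m+1), c i j • Z i j)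
      = (∑ i ∈ range (m+1), ∑ j ∈ Ico 0 i, c i j • Z i j)
        + (∑ i ∈ range (m+1), ∑ t ∈ range (n'+1), c i (i+t) • Z i (i+t))
        + (∑ i ∈ range (m+1), ∑ j ∈ Ico (i+n'+1) (m+n'+1), c i j • Z i j) := by
    intro n' Z c
    rw [Finset.sum_comm, ← Finset.sum_add_distrib, ← Finset.sum_add_distrib]
    apply Finset.sum_congr rfl
    intro i hi
    simp only [Finset.mem_range] at hi
    have midconv : ∑ j ∈ Ico i (i+n'+1), c i j • Z i j
        = ∑ t ∈ Ico 0 (n'+1), c i (i+t) • Z i (i+t) := by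
      rw [Finset.sum_Ico_eq_sum_range, show i + n' + 1 - i = n' + 1 by omega,
        Finset.range_eq_Ico]
    have e1 := Finset.sum_Ico_consecutive (m := 0) (n := i) (k := m+n'+1)
      (fun j => c i j • Z i j) (by omega) (by omega)
    have e2 := Finset.sum_Ico_consecutive (m := i) (n := i+n'+1) (k := m+n'+1)
      (fun j => c i j • Z i j) (by omega) (by omega)
    rw [Finset.range_eq_Ico, ← e1, ← e2, midconv, Finset.range_eq_Ico]
    abel
  rw [split n X (fun i j => (-1:ℤ)^(p*j+n*i)), split p Y (fun i j => (-1:ℤ)^(n*j+p*i))]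
  -- mid sums equal the nested sums
  have midX : (∑ i ∈ range (m+1), ∑ t ∈ range (n+1),
        ((-1:ℤ)^(p*(i+t)+n*i)) • X i (i+t))
      = ∑ i ∈ range (m+1), ∑ t ∈ range (n+1), ((-1:ℤ)^((n+p)*i+p*t)) • NG i t := by
    refine Finset.sum_congr rfl fun i hi => Finset.sum_congr rfl fun t ht => ?_
    simp only [Finset.mem_range] at hi ht
    rw [hmid i t (by omega) (by omega)]
    congr 1
    congr 1
    ring
  have midY : (∑ i ∈ range (m+1), ∑ t ∈ range (p+1),
        ((-1:ℤ)^(n*(i+t)+p*i)) • Y i (i+t))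
      = ∑ i ∈ range (m+1), ∑ t ∈ range (p+1), ((-1:ℤ)^((p+n)*i+n*t)) • NH i t := by
    refine Finset.sum_congr rfl fun i hi => Finset.sum_congr rfl fun t ht => ?_
    simp only [Finset.mem_range] at hi ht
    rw [hmid' i t (by omega) (by omega)]
    congr 1
    congr 1
    ring
  rw [midX, midY]
  -- the two cross claims
  have claimA : (∑ i ∈ range (m+1), ∑ j ∈ Ico 0 i, ((-1:ℤ)^(p*j+n*i)) • X i j)
      = ((-1:ℤ)^(n*p)) • ∑ i ∈ range (m+1), ∑ j ∈ Ico (i+p+1) (m+p+1),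
          ((-1:ℤ)^(n*j+p*i)) • Y i j := by
    rw [Finset.smul_sum]
    simp only [Finset.smul_sum]
    rw [Finset.sum_sigma', Finset.sum_sigma']
    refine Finset.sum_nbij' (fun q : (_ : ℕ) × ℕ => (⟨q.2, q.1 + p⟩ : (_ : ℕ) × ℕ))
      (fun q : (_ : ℕ) × ℕ => (⟨q.2 - p, q.1⟩ : (_ : ℕ) × ℕ)) ?_ ?_ ?_ ?_ ?_
    · rintro ⟨i, j⟩ hq
      simp only [Finset.mem_sigma, Finset.mem_range, Finset.mem_Ico] at hq ⊢
      omega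
    · rintro ⟨i, j⟩ hq
      simp only [Finset.mem_sigma, Finset.mem_range, Finset.mem_Ico] at hq ⊢
      omega
    · rintro ⟨i, j⟩ hq
      simp only [Finset.mem_sigma, Finset.mem_range, Finset.mem_Ico] at hq
      simp only [Nat.add_sub_cancel]
    · rintro ⟨i, j⟩ hq
      simp only [Finset.mem_sigma, Finset.mem_range, Finset.mem_Ico] at hq
      simp only [Nat.sub_add_cancel (show p ≤ j by omega)]
    · intro q hq
      obtain ⟨i, j⟩ := q
      simp only [Finset.mem_sigma, Finset.mem_range, Finset.mem_Ico] at hq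
      dsimp only
      rw [hlow i j (by omega) (by omega), smul_smul, ← pow_add,
        show n*p + (n*(i+p)+p*j) = 2*(n*p) + (p*j+n*i) by ring, npow_two_mul_add]
  have claimB : (∑ i ∈ range (m+1), ∑ j ∈ Ico (i+n+1) (m+n+1), ((-1:ℤ)^(p*j+n*i)) • X i j)
      = ((-1:ℤ)^(n*p)) • ∑ i ∈ range (m+1), ∑ j ∈ Ico 0 i, ((-1:ℤ)^(n*j+p*i)) • Y i j := by
    rw [Finset.smul_sum]
    simp only [Finset.smul_sum]
    rw [Finset.sum_sigma', Finset.sum_sigma']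
    refine Finset.sum_nbij' (fun q : (_ : ℕ) × ℕ => (⟨q.2 - n, q.1⟩ : (_ : ℕ) × ℕ))
      (fun q : (_ : ℕ) × ℕ => (⟨q.2, q.1 + n⟩ : (_ : ℕ) × ℕ)) ?_ ?_ ?_ ?_ ?_
    · rintro ⟨i, j⟩ hq
      simp only [Finset.mem_sigma, Finset.mem_range, Finset.mem_Ico] at hq ⊢
      omega
    · rintro ⟨i, j⟩ hq
      simp only [Finset.mem_sigma, Finset.mem_range, Finset.mem_Ico] at hq ⊢
      omega
    · rintro ⟨i, j⟩ hq
      simp only [Finset.mem_sigma, Finset.mem_range, Finset.mem_Ico] at hq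
      simp only [Nat.sub_add_cancel (show n ≤ j by omega)]
    · rintro ⟨i, j⟩ hq
      simp only [Finset.mem_sigma, Finset.mem_range, Finset.mem_Ico] at hq
      simp only [Nat.add_sub_cancel]
    · intro q hq
      obtain ⟨i, j⟩ := q
      dsimp only
      simp only [Finset.mem_sigma, Finset.mem_range, Finset.mem_Ico] at hq
      obtain ⟨d, rfl⟩ : ∃ d, j = n + d := ⟨j - n, by omega⟩
      rw [hhigh i (n + d) (by omega) (by omega) (by omega), smul_smul, ← pow_add,
        show n + d - n = d by omega]
      congr 1
      ring
  have collapse : ∀ L M H : A, L + M + H - M = L + H := by intro L M H; abel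
  rw [collapse, collapse, smul_add, claimA, claimB, add_comm]

lemma fin_sum_to_range {M : Type*} [AddCommMonoid M] {N : ℕ} (F : Fin N → M) (G : ℕ → M)
    (hFG : ∀ j : Fin N, F j = G ↑j) : ∑ j : Fin N, F j = ∑ j ∈ Finset.range N, G j := by
  rw [← Fin.sum_univ_eq_sum_range]
  exact Finset.sum_congr rfl (fun j _ => hFG j)

lemma fin_mk_min {N : ℕ} (j : Fin (N + 1)) :
    (⟨min (↑j) N, by omega⟩ : Fin (N + 1)) = j :=
  Fin.ext (by simp [Nat.min_eq_left (Nat.le_of_lt_succ j.2)])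

lemma expandA {A : Type*} [AddCommGroup A] (α : A → A) {m n p : ℕ}
    (f : (Fin (m + 1) → A) → A) (g : (Fin (n + 1) → A) → A) (h : (Fin (p + 1) → A) → A)
    (a : Fin (m + n + p + 1) → A) :
    vcirc α (vcirc α f g) h a
      = ∑ j ∈ Finset.range (m+n+1), ∑ i ∈ Finset.range (m+1),
          ((-1:ℤ)^(p*j+n*i)) •
            circI α ⟨min j (m+n), by omega⟩ (circI α ⟨min i m, by omega⟩ f g) h a := by
  have base : vcirc α (vcirc α f g) h a
      = ∑ j : Fin (m+n+1), (-1:ℤ)^(p*(j:ℕ)) • ∑ i : Fin (m+1), (-1:ℤ)^(n*(i:ℕ)) •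
          circI α j (circI α i f g) h a := rfl
  rw [base]
  apply fin_sum_to_range
  intro j
  rw [Finset.smul_sum]
  apply fin_sum_to_range
  intro i
  rw [smul_smul, ← pow_add, fin_mk_min j, fin_mk_min i]

lemma circI_linear {K : Type*} [Field K] {A : Type*} [AddCommGroup A] [Module K A]
    (α : A → A) {m q : ℕ} (f : MultilinearMap K (fun _ : Fin (m + 1) => A) A)
    (i : Fin (m + 1)) {ι : Type*} (s : Finset ι) (c : ι → ℤ)
    (G : ι → (Fin (q + 1) → A) → A) (a : Fin (m + q + 1) → A) :
    circI α i (⇑f) (fun b => ∑ x ∈ s, c x • G x b) a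
      = ∑ x ∈ s, c x • circI α i (⇑f) (G x) a := by
  classical
  set T : Fin (m + 1) → A := fun k =>
    if (k : ℕ) < (i : ℕ) then α^[q] (a ⟨(k : ℕ), by omega⟩)
    else α^[q] (a ⟨(k : ℕ) + q, by omega⟩) with hT
  set seg : Fin (q + 1) → A := fun l => a ⟨(i : ℕ) + (l : ℕ), by omega⟩ with hseg
  have key : ∀ G' : (Fin (q + 1) → A) → A,
      circI α i (⇑f) G' a = f (Function.update T i (G' seg)) := by
    intro G'
    show f _ = f _
    congr 1
    funext k
    rw [Function.update_apply, hT]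
    by_cases hk : k = i
    · subst hk
      simp
      rfl
    · have hk' : (k : ℕ) ≠ (i : ℕ) := fun hv => hk (Fin.ext hv)
      simp only [if_neg hk, if_neg hk']
  rw [key]
  have step : f (Function.update T i (∑ x ∈ s, c x • G x seg))
      = ∑ x ∈ s, c x • f (Function.update T i (G x seg)) := by
    have : f (Function.update T i (∑ x ∈ s, c x • G x seg))
        = f.toLinearMap T i (∑ x ∈ s, c x • G x seg) := rfl
    rw [this, map_sum]
    refine Finset.sum_congr rfl fun x _ => ?_
    rw [map_zsmul]
    rfl
  rw [step]
  exact Finset.sum_congr rfl fun x _ => by rw [key]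

lemma expandB {K : Type*} [Field K] {A : Type*} [AddCommGroup A] [Module K A]
    (α : A → A) {m n p : ℕ}
    (f : MultilinearMap K (fun _ : Fin (m + 1) => A) A)
    (g : (Fin (n + 1) → A) → A) (h : (Fin (p + 1) → A) → A)
    (a : Fin (m + (n + p) + 1) → A) :
    vcirc α (⇑f) (vcirc α g h) a
      = ∑ i ∈ Finset.range (m+1), ∑ t ∈ Finset.range (n+1),
          ((-1:ℤ)^((n+p)*i+p*t)) •
            circI α ⟨min i m, by omega⟩ (⇑f) (circI α ⟨min t n, by omega⟩ g h) a := by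
  have base : vcirc α (⇑f) (vcirc α g h) a
      = ∑ i : Fin (m+1), (-1:ℤ)^((n+p)*(i:ℕ)) •
          circI α i (⇑f) (fun b => ∑ t : Fin (n+1), (-1:ℤ)^(p*(t:ℕ)) • circI α t g h b) a :=
    rfl
  rw [base]
  apply fin_sum_to_range
  intro i
  rw [circI_linear, Finset.smul_sum]
  apply fin_sum_to_range
  intro t
  rw [smul_smul, ← pow_add, fin_mk_min i, fin_mk_min t]

end PreLieAux

/-- The α-twisted insertions make `{V^α_m, ∘ᵢ}` a pre-Lie system; consequently
`f ∘ g = Σᵢ (-1)^{ni} f ∘ᵢ g` makes `⊕ V^α_m` a graded pre-Lie algebra: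
`(f ∘ g) ∘ h - f ∘ (g ∘ h) = (-1)^{np} [(f ∘ h) ∘ g - f ∘ (h ∘ g)]`. -/
theorem vcirc_graded_preLie
    {K : Type*} [Field K] [CharZero K] {A : Type*} [AddCommGroup A] [Module K A]
    (α : A →ₗ[K] A) (m n p : ℕ)
    (f : MultilinearMap K (fun _ : Fin (m + 1) => A) A)
    (g : MultilinearMap K (fun _ : Fin (n + 1) => A) A)
    (h : MultilinearMap K (fun _ : Fin (p + 1) => A) A)
    (hf : IsCompat (⇑α) (⇑f)) (hg : IsCompat (⇑α) (⇑g)) (hh : IsCompat (⇑α) (⇑h)) :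
    ∀ a : Fin (m + n + p + 1) → A,
      vcirc (⇑α) (vcirc (⇑α) (⇑f) (⇑g)) (⇑h) a
          - vcirc (⇑α) (⇑f) (vcirc (⇑α) (⇑g) (⇑h)) (reindex (by omega) a)
      = ((-1 : ℤ) ^ (n * p)) •
          (vcirc (⇑α) (vcirc (⇑α) (⇑f) (⇑h)) (⇑g) (reindex (by omega) a)
            - vcirc (⇑α) (⇑f) (vcirc (⇑α) (⇑h) (⇑g)) (reindex (by omega) a)) := by
  intro a
  rw [expandA (⇑α) (⇑f) (⇑g) (⇑h) a,
    expandB (⇑α) f (⇑g) (⇑h) (reindex (by omega) a),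
    expandA (⇑α) (⇑f) (⇑h) (⇑g) (reindex (by omega) a),
    expandB (⇑α) f (⇑h) (⇑g) (reindex (by omega) a)]
  refine core m n p _ _ _ _ ?_ ?_ ?_ ?_
  · intro i t hi ht
    simp only [Nat.min_eq_left (show i + t ≤ m + n by omega),
      Nat.min_eq_left (show i ≤ m by omega), Nat.min_eq_left (show t ≤ n by omega)]
    exact nested (⇑α) (⇑f) (⇑g) (⇑h) i t (by omega) (by omega) a
  · intro i t hi ht
    simp only [Nat.min_eq_left (show i + t ≤ m + p by omega),
      Nat.min_eq_left (show i ≤ m by omega), Nat.min_eq_left (show t ≤ p by omega)]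
    exact nested (⇑α) (⇑f) (⇑h) (⇑g) i t (by omega) (by omega) (reindex (by omega) a)
  · intro i j hi hj
    simp only [Nat.min_eq_left (show j ≤ m + n by omega),
      Nat.min_eq_left (show i ≤ m by omega),
      Nat.min_eq_left (show i + p ≤ m + p by omega),
      Nat.min_eq_left (show j ≤ m by omega)]
    exact disjoint_swap (⇑α) (⇑f) (⇑g) (⇑h) hg hh i j hi hj a
  · intro i j hi hj hj'
    obtain ⟨u, rfl⟩ : ∃ u, j = u + n := ⟨j - n, by omega⟩
    simp only [Nat.add_sub_cancel,
      Nat.min_eq_left (show u + n ≤ m + n by omega),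
      Nat.min_eq_left (show i ≤ m by omega),
      Nat.min_eq_left (show i ≤ m + p by omega),
      Nat.min_eq_left (show u ≤ m by omega)]
    exact (disjoint_swap (⇑α) (⇑f) (⇑h) (⇑g) hh hg u i (by omega) (by omega)
      (reindex (by omega) a)).symm
end

section
/- The graded commutator [f,g] = f ∘ g - (-1)^{mn} g ∘ f of the α-twisted pre-Lie product on ⊕_m V^α_m satisfies the graded Jacobi identity, making ⊕_m V^α_m a graded Lie algebra (with f ∈ V^α_m of degree m). -/
namespace VGL

variable {A : Type*}

/-- value-equality of tuples of (propositionally) equal lengths. -/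
def VEq {k k' : ℕ} (x : Fin k → A) (x' : Fin k' → A) : Prop :=
  ∀ (t : ℕ) (h1 : t < k) (h2 : t < k'), x ⟨t, h1⟩ = x' ⟨t, h2⟩

lemma VEq.rfl {k} (x : Fin k → A) : VEq x x := fun _ _ _ => _root_.rfl

lemma VEq.symm {k k'} {x : Fin k → A} {x' : Fin k' → A} (h : VEq x x') : VEq x' x :=
  fun t h1 h2 => (h t h2 h1).symm

lemma VEq.trans {k k' k''} {x : Fin k → A} {x' : Fin k' → A} {x'' : Fin k'' → A}
    (e : k = k') (h : VEq x x') (h' : VEq x' x'') : VEq x x'' := by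
  subst e
  intro t h1 h2
  exact (h t h1 h1).trans (h' t h1 h2)

lemma VEq.eq {k} {x x' : Fin k → A} (h : VEq x x') : x = x' := by
  funext t
  have := h t.val t.isLt t.isLt
  simpa using this

lemma reindex_vEq {p q} (e : q = p) (a : Fin p → A) : VEq (reindex e a) a := by
  subst e; exact VEq.rfl a

def FEq {k k'} (f : (Fin k → A) → A) (f' : (Fin k' → A) → A) : Prop :=
  ∀ x x', VEq x x' → f x = f' x'

lemma FEq.rfl {k} (f : (Fin k → A) → A) : FEq f f := fun _ _ h => by rw [h.eq]

lemma FEq_comp_reindex {k k'} (f : (Fin k → A) → A) (e : k = k') :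
    FEq (fun b : Fin k' → A => f (reindex e b)) f := by
  subst e; exact FEq.rfl f
lemma compat_iter {α : A → A} {k : ℕ} {F : (Fin k → A) → A} (hF : IsCompat α F)
    (t : ℕ) (a : Fin k → A) : α^[t] (F a) = F (fun i => α^[t] (a i)) := by
  induction t generalizing a with
  | zero => simp
  | succ t ih =>
    rw [Function.iterate_succ_apply', ih, hF]
    congr 1
    funext i
    rw [Function.iterate_succ_apply']

lemma circI_FEq (α : A → A) {m n m' n' : ℕ} (hm : m = m') (hn : n = n')
    {i : Fin (m + 1)} {i' : Fin (m' + 1)} (hi : (i : ℕ) = (i' : ℕ))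
    {f : (Fin (m + 1) → A) → A} {f' : (Fin (m' + 1) → A) → A}
    {g : (Fin (n + 1) → A) → A} {g' : (Fin (n' + 1) → A) → A}
    (hf : FEq f f') (hg : FEq g g') :
    FEq (circI α i f g) (circI α i' f' g') := by
  subst hm; subst hn
  have hii : i = i' := Fin.ext hi
  subst hii
  intro x x' hx
  simp only [circI]
  apply hf
  intro t h1 h2
  simp only
  split_ifs with hc1 hc2
  · exact congrArg _ (hx t (by omega) (by omega))
  · apply hg
    intro s s1 s2
    simp only
    exact hx ((i : ℕ) + s) (by omega) (by omega)
  · exact congrArg _ (hx (t + n) (by omega) (by omega))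

lemma vcirc_FEq [AddCommGroup A] (α : A → A) {m n m' n' : ℕ} (hm : m = m') (hn : n = n')
    {f : (Fin (m + 1) → A) → A} {f' : (Fin (m' + 1) → A) → A}
    {g : (Fin (n + 1) → A) → A} {g' : (Fin (n' + 1) → A) → A}
    (hf : FEq f f') (hg : FEq g g') :
    FEq (vcirc α f g) (vcirc α f' g') := by
  subst hm; subst hn
  intro x x' hx
  simp only [vcirc]
  exact Finset.sum_congr _root_.rfl fun i _ =>
    congrArg _ (circI_FEq α _root_.rfl _root_.rfl _root_.rfl hf hg x x' hx)

variable [AddCommGroup A]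

/-- the tuple fed to `f` in `circI`, with slot `i` replaced by `x`. -/
def slotTuple (α : A → A) {m n : ℕ} (i : Fin (m + 1)) (a : Fin (m + n + 1) → A) (x : A) :
    Fin (m + 1) → A := fun k =>
  if (k : ℕ) < (i : ℕ) then α^[n] (a ⟨(k : ℕ), by omega⟩)
    else if (k : ℕ) = (i : ℕ) then x
    else α^[n] (a ⟨(k : ℕ) + n, by omega⟩)

lemma circI_eq_slot (α : A → A) {m n : ℕ} (i : Fin (m + 1))
    (f : (Fin (m + 1) → A) → A) (g : (Fin (n + 1) → A) → A) (a : Fin (m + n + 1) → A) :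
    circI α i f g a
      = f (slotTuple α i a (g (fun l => a ⟨(i : ℕ) + (l : ℕ), by omega⟩))) := _root_.rfl

lemma slotTuple_update (α : A → A) {m n : ℕ} (i : Fin (m + 1)) (a : Fin (m + n + 1) → A)
    (x : A) : slotTuple α i a x = Function.update (slotTuple α i a 0) i x := by
  funext k
  by_cases hk : k = i
  · subst hk
    simp [slotTuple, Function.update]
  · rw [Function.update_of_ne hk]
    have hk' : (k : ℕ) ≠ (i : ℕ) := fun H => hk (Fin.ext H)
    simp only [slotTuple]
    split_ifs <;> first | rfl | exact absurd (by omega : (k:ℕ) = (i:ℕ)) hk'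

variable {K : Type*} [Field K] [Module K A]

lemma circI_multilinear (α : A → A) {m n : ℕ} (i : Fin (m + 1))
    (F : MultilinearMap K (fun _ : Fin (m + 1) => A) A) (G : (Fin (n + 1) → A) → A)
    (a : Fin (m + n + 1) → A) :
    circI α i (⇑F) G a
      = F.toLinearMap (slotTuple α i a 0) i (G (fun l => a ⟨(i : ℕ) + (l : ℕ), by omega⟩)) := by
  rw [circI_eq_slot, slotTuple_update]
  rfl

lemma circI_inner_sum (α : A → A) {m n : ℕ} (i : Fin (m + 1))
    (F : MultilinearMap K (fun _ : Fin (m + 1) => A) A) {ι : Type*} (s : Finset ι)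
    (c : ι → ℤ) (G : ι → (Fin (n + 1) → A) → A) (a : Fin (m + n + 1) → A) :
    circI α i (⇑F) (fun b => ∑ t ∈ s, c t • G t b) a
      = ∑ t ∈ s, c t • circI α i (⇑F) (G t) a := by
  simp only [circI_multilinear]
  rw [map_sum]
  exact Finset.sum_congr _root_.rfl fun t _ => map_zsmul _ _ _

lemma circI_inner_sub (α : A → A) {m n : ℕ} (i : Fin (m + 1))
    (F : MultilinearMap K (fun _ : Fin (m + 1) => A) A) (c : ℤ)
    (G1 G2 : (Fin (n + 1) → A) → A) (a : Fin (m + n + 1) → A) :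
    circI α i (⇑F) (fun b => G1 b - c • G2 b) a
      = circI α i (⇑F) G1 a - c • circI α i (⇑F) G2 a := by
  simp only [circI_multilinear]
  rw [map_sub, map_zsmul]

lemma npow_aux (x y : ℕ) : ((-1 : ℤ)) ^ (x + 2 * y) = (-1) ^ x := by
  rw [pow_add, pow_mul]
  norm_num

lemma vcirc_outer_sub (α : A → A) {M p : ℕ} (G1 G2 : (Fin (M + 1) → A) → A) (c : ℤ)
    (h : (Fin (p + 1) → A) → A) (a : Fin (M + p + 1) → A) :
    vcirc α (fun b => G1 b - c • G2 b) h a = vcirc α G1 h a - c • vcirc α G2 h a := by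
  have key : ∀ j : Fin (M + 1), circI α j (fun b => G1 b - c • G2 b) h a
      = circI α j G1 h a - c • circI α j G2 h a := fun j => _root_.rfl
  simp only [vcirc, key, smul_sub, Finset.sum_sub_distrib, Finset.smul_sum]
  congr 1
  exact Finset.sum_congr _root_.rfl fun j _ => smul_comm _ _ _

lemma vcirc_inner_sub {K : Type*} [Field K] [Module K A] (α : A → A) {m N : ℕ}
    (F : MultilinearMap K (fun _ : Fin (m + 1) => A) A) (c : ℤ)
    (G1 G2 : (Fin (N + 1) → A) → A) (a : Fin (m + N + 1) → A) :
    vcirc α (⇑F) (fun b => G1 b - c • G2 b) a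
      = vcirc α (⇑F) G1 a - c • vcirc α (⇑F) G2 a := by
  simp only [vcirc, circI_inner_sub, smul_sub, Finset.sum_sub_distrib, Finset.smul_sum]
  congr 1
  exact Finset.sum_congr _root_.rfl fun j _ => smul_comm _ _ _

lemma vcirc_outer_vcirc (α : A → A) {m n p : ℕ}
    (f : (Fin (m + 1) → A) → A) (g : (Fin (n + 1) → A) → A) (h : (Fin (p + 1) → A) → A)
    (a : Fin (m + n + p + 1) → A) :
    vcirc α (vcirc α f g) h a
      = ∑ j : Fin (m + n + 1), ∑ i : Fin (m + 1),
          ((-1 : ℤ) ^ (p * (j : ℕ) + n * (i : ℕ))) • circI α j (circI α i f g) h a := by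
  have key : ∀ j : Fin (m + n + 1), circI α j (vcirc α f g) h a
      = ∑ i : Fin (m + 1), ((-1 : ℤ) ^ (n * (i : ℕ))) • circI α j (circI α i f g) h a :=
    fun j => _root_.rfl
  simp only [vcirc, key, Finset.smul_sum, smul_smul, ← pow_add]

lemma vcirc_inner_vcirc {K : Type*} [Field K] [Module K A] (α : A → A) {m n p : ℕ}
    (F : MultilinearMap K (fun _ : Fin (m + 1) => A) A)
    (g : (Fin (n + 1) → A) → A) (h : (Fin (p + 1) → A) → A)
    (a : Fin (m + (n + p) + 1) → A) :
    vcirc α (⇑F) (vcirc α g h) a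
      = ∑ i : Fin (m + 1), ∑ t : Fin (n + 1),
          ((-1 : ℤ) ^ ((n + p) * (i : ℕ) + p * (t : ℕ))) • circI α i (⇑F) (circI α t g h) a := by
  have key : ∀ i : Fin (m + 1), circI α i (⇑F) (vcirc α g h) a
      = ∑ t : Fin (n + 1), ((-1 : ℤ) ^ (p * (t : ℕ))) • circI α i (⇑F) (circI α t g h) a := by
    intro i
    exact circI_inner_sum α i F Finset.univ _ _ a
  simp only [vcirc, key, Finset.smul_sum, smul_smul, ← pow_add]

lemma VEq.app {k k'} {x : Fin k → A} {x' : Fin k' → A} (h : VEq x x') {s s' : ℕ}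
    (hs : s = s') (h1 : s < k) (h2 : s' < k') : x ⟨s, h1⟩ = x' ⟨s', h2⟩ := by
  subst hs; exact h s h1 h2

lemma circI_inside (α : A → A) {m n p : ℕ}
    (f : (Fin (m + 1) → A) → A) (g : (Fin (n + 1) → A) → A) (h : (Fin (p + 1) → A) → A)
    (i : Fin (m + 1)) (j : Fin (m + n + 1)) (t : Fin (n + 1))
    (hjt : (j : ℕ) = (i : ℕ) + (t : ℕ))
    (a : Fin (m + n + p + 1) → A) (a2 : Fin (m + (n + p) + 1) → A) (ha : VEq a a2) :
    circI α j (circI α i f g) h a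
      = circI α i f (circI α t g h) a2 := by
  simp only [circI, Fin.val_mk]
  congr 1
  funext k
  split_ifs <;>
    first
      | omega
      | ((conv_rhs => rw [Function.iterate_add_apply]);
          exact congrArg _ (congrArg _ (ha.app (by omega) _ _)))
      | (congr 1
         funext l
         try simp only [Fin.val_mk]
         split_ifs <;>
           first
             | omega
             | exact ha.app (by omega) _ _
             | exact congrArg _ (ha.app (by omega) _ _)
             | (congr 1
                funext t
                try simp only [Fin.val_mk]
                exact ha.app (by omega) _ _))

lemma iter_swap (α : A → A) (n p : ℕ) {x y : A} (hxy : x = y) :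
    α^[n] (α^[p] x) = α^[p] (α^[n] y) := by
  subst hxy
  rw [← Function.iterate_add_apply, ← Function.iterate_add_apply, Nat.add_comm]

lemma circI_swap (α : A → A) {m n p : ℕ}
    (f : (Fin (m + 1) → A) → A) {g : (Fin (n + 1) → A) → A} {h : (Fin (p + 1) → A) → A}
    (hg : IsCompat α g) (hh : IsCompat α h)
    (i : Fin (m + 1)) (j : Fin (m + n + 1)) (hji : (j : ℕ) < (i : ℕ))
    (i' : Fin (m + p + 1)) (j' : Fin (m + 1))
    (hi' : (i' : ℕ) = (i : ℕ) + p) (hj' : (j' : ℕ) = (j : ℕ))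
    (a : Fin (m + n + p + 1) → A) (b : Fin (m + p + n + 1) → A) (hab : VEq a b) :
    circI α j (circI α i f g) h a
      = circI α i' (circI α j' f h) g b := by
  simp only [circI, Fin.val_mk]
  congr 1
  funext k
  split_ifs <;>
    first
      | omega
      | exact iter_swap α n p (hab.app (by omega) _ _)
      | (rw [compat_iter hh]
         congr 1
         funext l
         try simp only [Fin.val_mk]
         rw [if_pos (by omega)]
         exact congrArg _ (hab.app (by omega) _ _))
      | (rw [compat_iter hg]
         congr 1
         funext l
         try simp only [Fin.val_mk]
         rw [if_neg (by omega), if_neg (by omega)]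
         exact congrArg _ (hab.app (by omega) _ _))

lemma circI_gt (α : A → A) {m n p : ℕ}
    (f : (Fin (m + 1) → A) → A) {g : (Fin (n + 1) → A) → A} {h : (Fin (p + 1) → A) → A}
    (hg : IsCompat α g) (hh : IsCompat α h)
    (i : Fin (m + 1)) (j : Fin (m + n + 1)) (hji : (i : ℕ) + n < (j : ℕ))
    (i' : Fin (m + p + 1)) (j' : Fin (m + 1))
    (hi' : (i' : ℕ) = (i : ℕ)) (hj' : (j' : ℕ) + n = (j : ℕ))
    (a : Fin (m + n + p + 1) → A) (b : Fin (m + p + n + 1) → A) (hab : VEq a b) :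
    circI α j (circI α i f g) h a
      = circI α i' (circI α j' f h) g b :=
  (circI_swap α f hh hg j' i' (by omega) j i (by omega) (by omega) b a hab.symm).symm

lemma preLie {K : Type*} [Field K] [Module K A] (α : A → A) {m n p : ℕ}
    (F : MultilinearMap K (fun _ : Fin (m + 1) => A) A)
    {g : (Fin (n + 1) → A) → A} {h : (Fin (p + 1) → A) → A}
    (hg : IsCompat α g) (hh : IsCompat α h)
    (a : Fin (m + n + p + 1) → A) (a2 : Fin (m + (n + p) + 1) → A)
    (a3 : Fin (m + p + n + 1) → A) (a4 : Fin (m + (p + n) + 1) → A)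
    (ha2 : VEq a a2) (ha3 : VEq a a3) (ha4 : VEq a a4) :
    vcirc α (vcirc α (⇑F) g) h a - vcirc α (⇑F) (vcirc α g h) a2
      = ((-1 : ℤ) ^ (n * p)) •
          (vcirc α (vcirc α (⇑F) h) g a3 - vcirc α (⇑F) (vcirc α h g) a4) := by
  classical
  have e34 : m + p + n + 1 = m + n + p + 1 := by omega
  have ha34 : VEq a3 a4 := VEq.trans e34 ha3.symm ha4
  rw [vcirc_outer_vcirc α (⇑F) g h a, vcirc_inner_vcirc α F g h a2,
      vcirc_outer_vcirc α (⇑F) h g a3, vcirc_inner_vcirc α F h g a4]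
  have L1 : (∑ j : Fin (m + n + 1), ∑ i : Fin (m + 1),
        ((-1 : ℤ) ^ (p * (j : ℕ) + n * (i : ℕ))) • circI α j (circI α i (⇑F) g) h a)
      = ∑ ij ∈ (Finset.univ ×ˢ Finset.univ : Finset (Fin (m + 1) × Fin (m + n + 1))),
          ((-1 : ℤ) ^ (p * (ij.2 : ℕ) + n * (ij.1 : ℕ))) •
            circI α ij.2 (circI α ij.1 (⇑F) g) h a := by
    rw [Finset.sum_product]
    exact Finset.sum_comm
  have L1' : (∑ j : Fin (m + p + 1), ∑ i : Fin (m + 1),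
        ((-1 : ℤ) ^ (n * (j : ℕ) + p * (i : ℕ))) • circI α j (circI α i (⇑F) h) g a3)
      = ∑ ij ∈ (Finset.univ ×ˢ Finset.univ : Finset (Fin (m + 1) × Fin (m + p + 1))),
          ((-1 : ℤ) ^ (n * (ij.2 : ℕ) + p * (ij.1 : ℕ))) •
            circI α ij.2 (circI α ij.1 (⇑F) h) g a3 := by
    rw [Finset.sum_product]
    exact Finset.sum_comm
  rw [L1, L1',
    ← Finset.sum_filter_add_sum_filter_not
      (Finset.univ ×ˢ Finset.univ : Finset (Fin (m + 1) × Fin (m + n + 1)))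
      (fun ij => (ij.1 : ℕ) ≤ (ij.2 : ℕ) ∧ (ij.2 : ℕ) ≤ (ij.1 : ℕ) + n),
    ← Finset.sum_filter_add_sum_filter_not
      (Finset.univ ×ˢ Finset.univ : Finset (Fin (m + 1) × Fin (m + p + 1)))
      (fun ij => (ij.1 : ℕ) ≤ (ij.2 : ℕ) ∧ (ij.2 : ℕ) ≤ (ij.1 : ℕ) + p)]
  have IN1 : (∑ ij ∈ (Finset.univ ×ˢ Finset.univ :
          Finset (Fin (m + 1) × Fin (m + n + 1))).filter
          (fun ij => (ij.1 : ℕ) ≤ (ij.2 : ℕ) ∧ (ij.2 : ℕ) ≤ (ij.1 : ℕ) + n),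
        ((-1 : ℤ) ^ (p * (ij.2 : ℕ) + n * (ij.1 : ℕ))) •
          circI α ij.2 (circI α ij.1 (⇑F) g) h a)
      = ∑ i : Fin (m + 1), ∑ t : Fin (n + 1),
          ((-1 : ℤ) ^ ((n + p) * (i : ℕ) + p * (t : ℕ))) •
            circI α i (⇑F) (circI α t g h) a2 := by
    rw [← Finset.sum_product']
    refine (Finset.sum_bij'
      (fun it (_ : it ∈ (Finset.univ ×ˢ Finset.univ :
          Finset (Fin (m + 1) × Fin (n + 1)))) =>
        ((it.1, ⟨(it.1 : ℕ) + (it.2 : ℕ), by omega⟩) : Fin (m + 1) × Fin (m + n + 1)))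
      (fun ij hij =>
        ((ij.1, ⟨(ij.2 : ℕ) - (ij.1 : ℕ), by
          have := (Finset.mem_filter.mp hij).2
          omega⟩) : Fin (m + 1) × Fin (n + 1)))
      (fun it _ => by
        simp only [Finset.mem_filter, Finset.mem_product, Finset.mem_univ, true_and,
          Fin.val_mk, and_true]
        omega)
      (fun ij hij => by
        simp only [Finset.mem_product, Finset.mem_univ, and_self])
      (fun it _ => by
        ext
        · rfl
        · simp only [Fin.val_mk]
          omega)
      (fun ij hij => by
        have := (Finset.mem_filter.mp hij).2
        ext
        · rfl
        · simp only [Fin.val_mk]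
          omega)
      (fun it _ => by
        rw [← circI_inside α (⇑F) g h it.1 ⟨(it.1 : ℕ) + (it.2 : ℕ), by omega⟩ it.2
          (by simp only [Fin.val_mk]) a a2 ha2]
        congr 2
        simp only [Fin.val_mk]
        ring)).symm
  have IN2 : (∑ ij ∈ (Finset.univ ×ˢ Finset.univ :
          Finset (Fin (m + 1) × Fin (m + p + 1))).filter
          (fun ij => (ij.1 : ℕ) ≤ (ij.2 : ℕ) ∧ (ij.2 : ℕ) ≤ (ij.1 : ℕ) + p),
        ((-1 : ℤ) ^ (n * (ij.2 : ℕ) + p * (ij.1 : ℕ))) •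
          circI α ij.2 (circI α ij.1 (⇑F) h) g a3)
      = ∑ i : Fin (m + 1), ∑ t : Fin (p + 1),
          ((-1 : ℤ) ^ ((p + n) * (i : ℕ) + n * (t : ℕ))) •
            circI α i (⇑F) (circI α t h g) a4 := by
    rw [← Finset.sum_product']
    refine (Finset.sum_bij'
      (fun it (_ : it ∈ (Finset.univ ×ˢ Finset.univ :
          Finset (Fin (m + 1) × Fin (p + 1)))) =>
        ((it.1, ⟨(it.1 : ℕ) + (it.2 : ℕ), by omega⟩) : Fin (m + 1) × Fin (m + p + 1)))
      (fun ij hij =>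
        ((ij.1, ⟨(ij.2 : ℕ) - (ij.1 : ℕ), by
          have := (Finset.mem_filter.mp hij).2
          omega⟩) : Fin (m + 1) × Fin (p + 1)))
      (fun it _ => by
        simp only [Finset.mem_filter, Finset.mem_product, Finset.mem_univ, true_and,
          Fin.val_mk, and_true]
        omega)
      (fun ij hij => by
        simp only [Finset.mem_product, Finset.mem_univ, and_self])
      (fun it _ => by
        ext
        · rfl
        · simp only [Fin.val_mk]
          omega)
      (fun ij hij => by
        have := (Finset.mem_filter.mp hij).2
        ext
        · rfl
        · simp only [Fin.val_mk]
          omega)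
      (fun it _ => by
        rw [← circI_inside α (⇑F) h g it.1 ⟨(it.1 : ℕ) + (it.2 : ℕ), by omega⟩ it.2
          (by simp only [Fin.val_mk]) a3 a4 ha34]
        congr 2
        simp only [Fin.val_mk]
        ring)).symm
  rw [IN1, IN2]
  have OUT : (∑ ij ∈ (Finset.univ ×ˢ Finset.univ :
          Finset (Fin (m + 1) × Fin (m + n + 1))).filter
          (fun ij => ¬((ij.1 : ℕ) ≤ (ij.2 : ℕ) ∧ (ij.2 : ℕ) ≤ (ij.1 : ℕ) + n)),
        ((-1 : ℤ) ^ (p * (ij.2 : ℕ) + n * (ij.1 : ℕ))) •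
          circI α ij.2 (circI α ij.1 (⇑F) g) h a)
      = ((-1 : ℤ) ^ (n * p)) •
        ∑ ij ∈ (Finset.univ ×ˢ Finset.univ :
            Finset (Fin (m + 1) × Fin (m + p + 1))).filter
            (fun ij => ¬((ij.1 : ℕ) ≤ (ij.2 : ℕ) ∧ (ij.2 : ℕ) ≤ (ij.1 : ℕ) + p)),
          ((-1 : ℤ) ^ (n * (ij.2 : ℕ) + p * (ij.1 : ℕ))) •
            circI α ij.2 (circI α ij.1 (⇑F) h) g a3 := by
    rw [Finset.smul_sum]
    refine Finset.sum_bij'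
      (fun ij hij =>
        if hc : (ij.2 : ℕ) < (ij.1 : ℕ) then
          ((⟨(ij.2 : ℕ), by omega⟩, ⟨(ij.1 : ℕ) + p, by omega⟩) :
            Fin (m + 1) × Fin (m + p + 1))
        else
          ((⟨(ij.2 : ℕ) - n, by
              have := (Finset.mem_filter.mp hij).2
              simp only [not_and, not_le] at this
              omega⟩, ⟨(ij.1 : ℕ), by omega⟩) : Fin (m + 1) × Fin (m + p + 1)))
      (fun ij hij =>
        if hc : (ij.2 : ℕ) < (ij.1 : ℕ) then
          ((⟨(ij.2 : ℕ), by omega⟩, ⟨(ij.1 : ℕ) + n, by omega⟩) :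
            Fin (m + 1) × Fin (m + n + 1))
        else
          ((⟨(ij.2 : ℕ) - p, by
              have := (Finset.mem_filter.mp hij).2
              simp only [not_and, not_le] at this
              omega⟩, ⟨(ij.1 : ℕ), by omega⟩) : Fin (m + 1) × Fin (m + n + 1)))
      (fun ij hij => by
        have := (Finset.mem_filter.mp hij).2
        simp only [not_and, not_le] at this
        by_cases hc : (ij.2 : ℕ) < (ij.1 : ℕ)
        · rw [dif_pos hc]
          simp only [Finset.mem_filter, Finset.mem_product, Finset.mem_univ, true_and,
            and_self, Fin.val_mk, not_and, not_le]
          omega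
        · rw [dif_neg hc]
          simp only [Finset.mem_filter, Finset.mem_product, Finset.mem_univ, true_and,
            and_self, Fin.val_mk, not_and, not_le]
          omega)
      (fun ij hij => by
        have := (Finset.mem_filter.mp hij).2
        simp only [not_and, not_le] at this
        by_cases hc : (ij.2 : ℕ) < (ij.1 : ℕ)
        · rw [dif_pos hc]
          simp only [Finset.mem_filter, Finset.mem_product, Finset.mem_univ, true_and,
            and_self, Fin.val_mk, not_and, not_le]
          omega
        · rw [dif_neg hc]
          simp only [Finset.mem_filter, Finset.mem_product, Finset.mem_univ, true_and,
            and_self, Fin.val_mk, not_and, not_le]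
          omega)
      (fun ij hij => by
        have := (Finset.mem_filter.mp hij).2
        simp only [not_and, not_le] at this
        by_cases hc : (ij.2 : ℕ) < (ij.1 : ℕ)
        · simp only [dif_pos hc]
          rw [dif_neg (by omega)]
          ext
          · simp only [Fin.val_mk]
            omega
          · simp only [Fin.val_mk]
        · simp only [dif_neg hc]
          rw [dif_pos (by omega)]
          ext
          · simp only [Fin.val_mk]
          · simp only [Fin.val_mk]
            omega)
      (fun ij hij => by
        have := (Finset.mem_filter.mp hij).2
        simp only [not_and, not_le] at this
        by_cases hc : (ij.2 : ℕ) < (ij.1 : ℕ)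
        · simp only [dif_pos hc]
          rw [dif_neg (by omega)]
          ext
          · simp only [Fin.val_mk]
            omega
          · simp only [Fin.val_mk]
        · simp only [dif_neg hc]
          rw [dif_pos (by omega)]
          ext
          · simp only [Fin.val_mk]
          · simp only [Fin.val_mk]
            omega)
      (fun ij hij => by
        have hmem := (Finset.mem_filter.mp hij).2
        simp only [not_and, not_le] at hmem
        by_cases hc : (ij.2 : ℕ) < (ij.1 : ℕ)
        · rw [dif_pos hc]
          rw [circI_swap α (⇑F) hg hh ij.1 ij.2 hc
            (⟨(ij.1 : ℕ) + p, by omega⟩ : Fin (m + p + 1))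
            (⟨(ij.2 : ℕ), by omega⟩ : Fin (m + 1))
            (by simp only [Fin.val_mk]) (by simp only [Fin.val_mk]) a a3 ha3]
          rw [smul_smul, ← pow_add]
          congr 1
          simp only [Fin.val_mk]
          rw [show n * p + (n * ((ij.1 : ℕ) + p) + p * (ij.2 : ℕ))
            = (p * (ij.2 : ℕ) + n * (ij.1 : ℕ)) + 2 * (n * p) from by ring, npow_aux]
        · have hgt : (ij.1 : ℕ) + n < (ij.2 : ℕ) := by omega
          rw [dif_neg hc]
          rw [circI_gt α (⇑F) hg hh ij.1 ij.2 hgt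
            (⟨(ij.1 : ℕ), by omega⟩ : Fin (m + p + 1))
            (⟨(ij.2 : ℕ) - n, by omega⟩ : Fin (m + 1))
            (by simp only [Fin.val_mk]) (by simp only [Fin.val_mk]; omega) a a3 ha3]
          rw [smul_smul, ← pow_add]
          congr 1
          simp only [Fin.val_mk]
          obtain ⟨q, hq⟩ : ∃ q, (ij.2 : ℕ) = q + n := ⟨(ij.2 : ℕ) - n, by omega⟩
          rw [hq, show q + n - n = q from by omega,
            show n * p + (n * (ij.1 : ℕ) + p * q) = (p * (q + n) + n * (ij.1 : ℕ)) + 2 * 0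
              from by ring, npow_aux])
  rw [OUT, smul_sub, smul_add]
  abel

lemma reindex_reindex {p q : ℕ} (e1 : q = p) (e2 : p = q) (a : Fin p → A) :
    reindex e2 (reindex e1 a) = a := by
  subst e1
  rfl

lemma neg_one_pow_mul_self (k : ℕ) : ((-1 : ℤ) ^ k) * (-1 : ℤ) ^ k = 1 := by
  rw [← pow_add, show k + k = 0 + 2 * k from by ring, npow_aux, pow_zero]

lemma assemble (u v w : ℤ) (hu : u * u = 1) (hv : v * v = 1) (hw : w * w = 1)
    (X1 X2 X3 X4 X5 X6 X7 X8 X9 X10 X11 X12 : A)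
    (P1 : X1 - X2 = w • (X3 - X4))
    (P2 : X5 - X6 = v • (X7 - X8))
    (P3 : X9 - X10 = u • (X11 - X12)) :
    v • (X1 - u • X7 - (v * w) • (X10 - u • X12))
      + u • (X5 - w • X11 - (u * v) • (X2 - w • X4))
      + w • (X9 - v • X3 - (w * u) • (X6 - v • X8)) = 0 := by
  have h1 : X1 = X2 + w • (X3 - X4) := by rw [← P1]; abel
  have h2 : X5 = X6 + v • (X7 - X8) := by rw [← P2]; abel
  have h3 : X9 = X10 + u • (X11 - X12) := by rw [← P3]; abel
  rw [h1, h2, h3]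
  rcases mul_self_eq_one_iff.mp hu with hu' | hu' <;>
    rcases mul_self_eq_one_iff.mp hv with hv' | hv' <;>
      rcases mul_self_eq_one_iff.mp hw with hw' | hw' <;>
        subst hu' <;> subst hv' <;> subst hw' <;> module

lemma antisym (α : A → A) {m n : ℕ}
    (f : (Fin (m + 1) → A) → A) (g : (Fin (n + 1) → A) → A) (a : Fin (m + n + 1) → A) :
    vbracket α f g a
      = -((-1 : ℤ) ^ (m * n)) • vbracket α g f (reindex (by omega) a) := by
  simp only [vbracket]
  rw [Nat.mul_comm n m, reindex_reindex]
  have hc := neg_one_pow_mul_self (m * n)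
  rcases mul_self_eq_one_iff.mp hc with h | h <;> rw [h] <;> module

end VGL

open VGL

/-- The graded commutator `[f,g] = f ∘ g - (-1)^{mn} g ∘ f` of the α-twisted pre-Lie
product is graded antisymmetric and satisfies the graded Jacobi identity, making
`⊕ V^α_m` a graded Lie algebra (with `f ∈ V^α_m` of degree `m`). -/
theorem vbracket_graded_Lie
    {K : Type*} [Field K] [CharZero K] {A : Type*} [AddCommGroup A] [Module K A]
    (α : A →ₗ[K] A) (m n p : ℕ)
    (f : MultilinearMap K (fun _ : Fin (m + 1) => A) A)
    (g : MultilinearMap K (fun _ : Fin (n + 1) => A) A)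
    (h : MultilinearMap K (fun _ : Fin (p + 1) => A) A)
    (hf : IsCompat (⇑α) (⇑f)) (hg : IsCompat (⇑α) (⇑g)) (hh : IsCompat (⇑α) (⇑h)) :
    (∀ a : Fin (m + n + 1) → A,
      vbracket (⇑α) (⇑f) (⇑g) a
        = -((-1 : ℤ) ^ (m * n)) • vbracket (⇑α) (⇑g) (⇑f) (reindex (by omega) a)) ∧
    (∀ a : Fin (m + n + p + 1) → A,
      ((-1 : ℤ) ^ (m * p)) • vbracket (⇑α) (vbracket (⇑α) (⇑f) (⇑g)) (⇑h) a
        + ((-1 : ℤ) ^ (n * m)) •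
            vbracket (⇑α) (vbracket (⇑α) (⇑g) (⇑h)) (⇑f) (reindex (by omega) a)
        + ((-1 : ℤ) ^ (p * n)) •
            vbracket (⇑α) (vbracket (⇑α) (⇑h) (⇑f)) (⇑g) (reindex (by omega) a)
      = 0) := by
  constructor
  · intro a
    exact antisym (⇑α) (⇑f) (⇑g) a
  · intro a
    rw [Nat.mul_comm n m, Nat.mul_comm p n]
    have P1 := preLie (⇑α) f hg hh a (reindex (by omega) a) (reindex (by omega) a)
      (reindex (by omega) a) (reindex_vEq _ a).symm (reindex_vEq _ a).symm
      (reindex_vEq _ a).symm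
    have P2 := preLie (⇑α) g hh hf (reindex (by omega) a) (reindex (by omega) a)
      (reindex (by omega) a) (reindex (by omega) a)
      (VEq.trans (by omega) (reindex_vEq _ a) (reindex_vEq _ a).symm)
      (VEq.trans (by omega) (reindex_vEq _ a) (reindex_vEq _ a).symm)
      (VEq.trans (by omega) (reindex_vEq _ a) (reindex_vEq _ a).symm)
    rw [Nat.mul_comm p m] at P2
    have P3 := preLie (⇑α) h hf hg (reindex (by omega) a) (reindex (by omega) a)
      (reindex (by omega) a) (reindex (by omega) a)
      (VEq.trans (by omega) (reindex_vEq _ a) (reindex_vEq _ a).symm)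
      (VEq.trans (by omega) (reindex_vEq _ a) (reindex_vEq _ a).symm)
      (VEq.trans (by omega) (reindex_vEq _ a) (reindex_vEq _ a).symm)
    have E1 : vbracket (⇑α) (vbracket (⇑α) (⇑f) (⇑g)) (⇑h) a
        = vcirc (⇑α) (vcirc (⇑α) (⇑f) (⇑g)) (⇑h) a
          - ((-1 : ℤ) ^ (m * n)) •
              vcirc (⇑α) (vcirc (⇑α) (⇑g) (⇑f)) (⇑h) (reindex (by omega) a)
          - (((-1 : ℤ) ^ (m * p)) * ((-1 : ℤ) ^ (n * p))) •
              (vcirc (⇑α) (⇑h) (vcirc (⇑α) (⇑f) (⇑g)) (reindex (by omega) a)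
                - ((-1 : ℤ) ^ (m * n)) •
                    vcirc (⇑α) (⇑h) (vcirc (⇑α) (⇑g) (⇑f)) (reindex (by omega) a)) := by
      simp only [vbracket]
      rw [show vbracket (⇑α) (⇑f) (⇑g) = fun b => vcirc (⇑α) (⇑f) (⇑g) b
          - ((-1 : ℤ) ^ (m * n)) • vcirc (⇑α) (⇑g) (⇑f) (reindex (by omega) b) from rfl]
      rw [vcirc_outer_sub, vcirc_inner_sub (⇑α) h]
      rw [show (m + n) * p = m * p + n * p from by ring, pow_add]
      rw [show vcirc (⇑α)
            (fun b : Fin (m + n + 1) → A => vcirc (⇑α) (⇑g) (⇑f) (reindex (by omega) b))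
            (⇑h) a
          = vcirc (⇑α) (vcirc (⇑α) (⇑g) (⇑f)) (⇑h) (reindex (by omega) a) from
        vcirc_FEq _ (by omega) rfl (FEq_comp_reindex _ (by omega)) (FEq.rfl _) a _
          (reindex_vEq _ a).symm]
      rw [show vcirc (⇑α) (⇑h)
            (fun b : Fin (m + n + 1) → A => vcirc (⇑α) (⇑g) (⇑f) (reindex (by omega) b))
            (reindex (by omega) a)
          = vcirc (⇑α) (⇑h) (vcirc (⇑α) (⇑g) (⇑f)) (reindex (by omega) a) from
        vcirc_FEq _ rfl (by omega) (FEq.rfl _) (FEq_comp_reindex _ (by omega)) _ _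
          (VEq.trans (by omega) (reindex_vEq _ a) (reindex_vEq _ a).symm)]
    have E2 : vbracket (⇑α) (vbracket (⇑α) (⇑g) (⇑h)) (⇑f) (reindex (by omega) a)
        = vcirc (⇑α) (vcirc (⇑α) (⇑g) (⇑h)) (⇑f) (reindex (by omega) a)
          - ((-1 : ℤ) ^ (n * p)) •
              vcirc (⇑α) (vcirc (⇑α) (⇑h) (⇑g)) (⇑f) (reindex (by omega) a)
          - (((-1 : ℤ) ^ (m * n)) * ((-1 : ℤ) ^ (m * p))) •
              (vcirc (⇑α) (⇑f) (vcirc (⇑α) (⇑g) (⇑h)) (reindex (by omega) a)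
                - ((-1 : ℤ) ^ (n * p)) •
                    vcirc (⇑α) (⇑f) (vcirc (⇑α) (⇑h) (⇑g)) (reindex (by omega) a)) := by
      simp only [vbracket]
      rw [show vbracket (⇑α) (⇑g) (⇑h) = fun b => vcirc (⇑α) (⇑g) (⇑h) b
          - ((-1 : ℤ) ^ (n * p)) • vcirc (⇑α) (⇑h) (⇑g) (reindex (by omega) b) from rfl]
      rw [vcirc_outer_sub, vcirc_inner_sub (⇑α) f]
      rw [show (n + p) * m = m * n + m * p from by ring, pow_add]
      rw [show vcirc (⇑α)
            (fun b : Fin (n + p + 1) → A => vcirc (⇑α) (⇑h) (⇑g) (reindex (by omega) b))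
            (⇑f) (reindex (by omega) a)
          = vcirc (⇑α) (vcirc (⇑α) (⇑h) (⇑g)) (⇑f) (reindex (by omega) a) from
        vcirc_FEq _ (by omega) rfl (FEq_comp_reindex _ (by omega)) (FEq.rfl _) _ _
          (VEq.trans (by omega) (reindex_vEq _ a) (reindex_vEq _ a).symm)]
      rw [show vcirc (⇑α) (⇑f) (vcirc (⇑α) (⇑g) (⇑h))
            (reindex (by omega) (reindex (by omega) a))
          = vcirc (⇑α) (⇑f) (vcirc (⇑α) (⇑g) (⇑h)) (reindex (by omega) a) from
        vcirc_FEq _ rfl rfl (FEq.rfl _) (FEq.rfl _) _ _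
          (VEq.trans (by omega) (reindex_vEq _ _)
            (VEq.trans (by omega) (reindex_vEq _ a) (reindex_vEq _ a).symm))]
      rw [show vcirc (⇑α) (⇑f)
            (fun b : Fin (n + p + 1) → A => vcirc (⇑α) (⇑h) (⇑g) (reindex (by omega) b))
            (reindex (by omega) (reindex (by omega) a))
          = vcirc (⇑α) (⇑f) (vcirc (⇑α) (⇑h) (⇑g)) (reindex (by omega) a) from
        vcirc_FEq _ rfl (by omega) (FEq.rfl _) (FEq_comp_reindex _ (by omega)) _ _
          (VEq.trans (by omega) (reindex_vEq _ _)
            (VEq.trans (by omega) (reindex_vEq _ a) (reindex_vEq _ a).symm))]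
    have E3 : vbracket (⇑α) (vbracket (⇑α) (⇑h) (⇑f)) (⇑g) (reindex (by omega) a)
        = vcirc (⇑α) (vcirc (⇑α) (⇑h) (⇑f)) (⇑g) (reindex (by omega) a)
          - ((-1 : ℤ) ^ (m * p)) •
              vcirc (⇑α) (vcirc (⇑α) (⇑f) (⇑h)) (⇑g) (reindex (by omega) a)
          - (((-1 : ℤ) ^ (n * p)) * ((-1 : ℤ) ^ (m * n))) •
              (vcirc (⇑α) (⇑g) (vcirc (⇑α) (⇑h) (⇑f)) (reindex (by omega) a)
                - ((-1 : ℤ) ^ (m * p)) •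
                    vcirc (⇑α) (⇑g) (vcirc (⇑α) (⇑f) (⇑h)) (reindex (by omega) a)) := by
      simp only [vbracket]
      rw [show vbracket (⇑α) (⇑h) (⇑f) = fun b => vcirc (⇑α) (⇑h) (⇑f) b
          - ((-1 : ℤ) ^ (p * m)) • vcirc (⇑α) (⇑f) (⇑h) (reindex (by omega) b) from rfl]
      rw [Nat.mul_comm p m]
      rw [vcirc_outer_sub, vcirc_inner_sub (⇑α) g]
      rw [show (p + m) * n = n * p + m * n from by ring, pow_add]
      rw [show vcirc (⇑α)
            (fun b : Fin (p + m + 1) → A => vcirc (⇑α) (⇑f) (⇑h) (reindex (by omega) b))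
            (⇑g) (reindex (by omega) a)
          = vcirc (⇑α) (vcirc (⇑α) (⇑f) (⇑h)) (⇑g) (reindex (by omega) a) from
        vcirc_FEq _ (by omega) rfl (FEq_comp_reindex _ (by omega)) (FEq.rfl _) _ _
          (VEq.trans (by omega) (reindex_vEq _ a) (reindex_vEq _ a).symm)]
      rw [show vcirc (⇑α) (⇑g) (vcirc (⇑α) (⇑h) (⇑f))
            (reindex (by omega) (reindex (by omega) a))
          = vcirc (⇑α) (⇑g) (vcirc (⇑α) (⇑h) (⇑f)) (reindex (by omega) a) from
        vcirc_FEq _ rfl rfl (FEq.rfl _) (FEq.rfl _) _ _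
          (VEq.trans (by omega) (reindex_vEq _ _)
            (VEq.trans (by omega) (reindex_vEq _ a) (reindex_vEq _ a).symm))]
      rw [show vcirc (⇑α) (⇑g)
            (fun b : Fin (p + m + 1) → A => vcirc (⇑α) (⇑f) (⇑h) (reindex (by omega) b))
            (reindex (by omega) (reindex (by omega) a))
          = vcirc (⇑α) (⇑g) (vcirc (⇑α) (⇑f) (⇑h)) (reindex (by omega) a) from
        vcirc_FEq _ rfl (by omega) (FEq.rfl _) (FEq_comp_reindex _ (by omega)) _ _
          (VEq.trans (by omega) (reindex_vEq _ _)
            (VEq.trans (by omega) (reindex_vEq _ a) (reindex_vEq _ a).symm))]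
    rw [E1, E2, E3]
    exact assemble _ _ _ (neg_one_pow_mul_self _) (neg_one_pow_mul_self _)
      (neg_one_pow_mul_self _) _ _ _ _ _ _ _ _ _ _ _ _ P1 P2 P3
end

section
/- In a multiplicative hom-associative algebra (A, μ, α), for any f ∈ Cⁿ_α(A,A), the coboundary is expressed via the Gerstenhaber bracket as δ_α f = -[f, μ]_α = (-1)^{n-1} [μ, f]_α. -/
/-- In a multiplicative hom-associative algebra `(A, μ, α)`, for `f ∈ Cⁿ_α(A,A)`
(here of degree `n + 1`), the coboundary is expressed via the Gerstenhaber bracket: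
`δ_α f = -[f, μ]_α = (-1)^{(n+1)-1} [μ, f]_α`. -/
theorem homDelta_eq_bracket_with_mul
    {K : Type*} [Field K] [CharZero K] {A : Type*} [AddCommGroup A] [Module K A]
    (μ : A →ₗ[K] A →ₗ[K] A) (α : A →ₗ[K] A)
    (hassoc : ∀ a b c : A, μ (α a) (μ b c) = μ (μ a b) (α c))
    (hmult : ∀ a b : A, α (μ a b) = μ (α a) (α b))
    (n : ℕ) (f : MultilinearMap K (fun _ : Fin (n + 1) => A) A)
    (hf : IsCompat (⇑α) (⇑f)) :
    ∀ a : Fin (n + 2) → A,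
      homDelta (fun x y => μ x y) (⇑α) (n + 1) (⇑f) a
        = - vbracket (⇑α) (⇑f) (fun v : Fin 2 → A => μ (v 0) (v 1)) a ∧
      homDelta (fun x y => μ x y) (⇑α) (n + 1) (⇑f) a
        = ((-1 : ℤ) ^ n) •
            vbracket (⇑α) (fun v : Fin 2 → A => μ (v 0) (v 1)) (⇑f)
              (reindex (by omega) a) := by
  intro a
  set g : (Fin 2 → A) → A := fun v => μ (v 0) (v 1) with hg
  -- the homDelta middle terms
  set D : Fin (n + 1) → A := fun i =>
    f (fun j => if (j : ℕ) < (i : ℕ) then α (a j.castSucc)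
        else if (j : ℕ) = (i : ℕ) then μ (a j.castSucc) (a j.succ)
        else α (a j.succ)) with hDdef
  set P : A := μ (α^[n] (a 0)) (f fun i => a i.succ) with hPdef
  set Q : A := μ (f fun i => a i.castSucc) (α^[n] (a (Fin.last (n + 1)))) with hQdef
  have hD : ∀ i : Fin (n + 1), circI (⇑α) i (⇑f) g a = D i := by
    intro i
    simp only [circI, hDdef]
    congr 1
    funext k
    simp only [Function.iterate_one]
    by_cases h1 : (k : ℕ) < (i : ℕ)
    · simp only [if_pos h1]
      exact congrArg α (congrArg a (Fin.ext rfl))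
    · by_cases h2 : (k : ℕ) = (i : ℕ)
      · simp only [if_neg h1, if_pos h2, hg]
        exact congrArg₂ (fun x y => μ x y)
          (congrArg a (Fin.ext (by simp <;> omega)))
          (congrArg a (Fin.ext (by simp <;> omega)))
      · simp only [if_neg h1, if_neg h2]
        exact congrArg α (congrArg a (Fin.ext rfl))
  have hsum1 : vcirc (⇑α) (⇑f) g a = ∑ i : Fin (n + 1), ((-1 : ℤ) ^ (i : ℕ)) • D i := by
    simp only [vcirc, one_mul]
    exact Finset.sum_congr rfl fun i _ => by rw [hD i]
  have hrr : ∀ (h : 1 + n + 1 = n + 2) (h' : n + 1 + 1 = 1 + n + 1),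
      reindex h' (reindex h a) = a := by
    intro h h'
    funext k
    exact congrArg a (Fin.ext rfl)
  have hQ' : ∀ (h : 1 + n + 1 = n + 2),
      circI (⇑α) (0 : Fin 2) g (⇑f) (reindex h a) = Q := by
    intro h
    simp only [circI, hg, hQdef, reindex]
    refine congrArg₂ (fun x y => μ x y) ?_ ?_
    · simp only [Fin.isValue, Fin.val_zero]
      norm_num
      exact congrArg f (funext fun l => congrArg a (Fin.ext (by simp <;> omega)))
    · norm_num
      exact congrArg (α^[n]) (congrArg a (Fin.ext (by simp [Fin.last] <;> omega)))
  have hP' : ∀ (h : 1 + n + 1 = n + 2),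
      circI (⇑α) (1 : Fin 2) g (⇑f) (reindex h a) = P := by
    intro h
    simp only [circI, hg, hPdef, reindex]
    refine congrArg₂ (fun x y => μ x y) ?_ ?_
    · norm_num
    · norm_num
      exact congrArg f (funext fun l => congrArg a (Fin.ext (by simp <;> omega)))
  have hsum2 : ∀ (h : 1 + n + 1 = n + 2),
      vcirc (⇑α) g (⇑f) (reindex h a) = Q + ((-1 : ℤ) ^ n) • P := by
    intro h
    have h2 : ∀ F : Fin (1 + 1) → A, (∑ i : Fin (1 + 1), F i) = F 0 + F 1 :=
      fun F => Fin.sum_univ_two F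
    simp only [vcirc]
    rw [h2]
    simp only [Fin.val_zero, Fin.val_one, mul_zero, mul_one, pow_zero, one_smul,
      hQ' h, hP' h]
  have hdelta : homDelta (fun x y => μ x y) (⇑α) (n + 1) (⇑f) a
      = P + (- ∑ i : Fin (n + 1), ((-1 : ℤ) ^ (i : ℕ)) • D i) + ((-1 : ℤ) ^ n) • Q := by
    simp only [homDelta, Nat.add_sub_cancel, ← hDdef, ← hPdef, ← hQdef]
    congr 1
    · congr 1
      rw [← Finset.sum_neg_distrib]
      exact Finset.sum_congr rfl fun i _ => by
        rw [pow_succ, mul_neg_one, neg_smul]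
    · congr 1
      have : ((-1 : ℤ) ^ (n + 1 + 1)) = (-1 : ℤ) ^ n := by ring
      rw [this]
  have hsq : ∀ x : A, ((-1 : ℤ) ^ n) • ((-1 : ℤ) ^ n) • x = x := by
    intro x
    rw [smul_smul, ← pow_add, Even.neg_one_pow ⟨n, rfl⟩, one_smul]
  constructor
  · rw [hdelta]
    simp only [vbracket, one_mul, mul_one, hsum1, hsum2]
    rw [smul_add, hsq]
    abel
  · rw [hdelta]
    simp only [vbracket, one_mul, mul_one, hsum2, hrr, hsum1]
    rw [smul_sub, smul_add, hsq, hsq]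
    abel
end

section
/- In a multiplicative hom-associative algebra (A, μ, α), for f ∈ C^m_α(A,A) and g ∈ Cⁿ_α(A,A), the Gerstenhaber bracket satisfies δ_α[f,g]_α = (-1)^{n+1} [δ_α f, g]_α + [f, δ_α g]_α. -/
section Helpers
variable {A : Type*}

lemma reindex_reindex {p q r : ℕ} (h1 : q = p) (h2 : r = q) (a : Fin p → A) :
    reindex h2 (reindex h1 a) = reindex (h2.trans h1) a := rfl

lemma reindex_self {p : ℕ} (h : p = p) (a : Fin p → A) : reindex h a = a := by
  funext k; simp [reindex, Fin.cast]

lemma fin_congr {p : ℕ} (a : Fin p → A) {i j : Fin p} (h : (i : ℕ) = (j : ℕ)) :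
    a i = a j := congrArg a (Fin.ext h)

lemma fin_mk_congr {N : ℕ} (a : Fin N → A) {v1 v2 : ℕ} (h1 : v1 < N) (h2 : v2 < N)
    (h : v1 = v2) : a ⟨v1, h1⟩ = a ⟨v2, h2⟩ := by subst h; rfl

lemma sgn_congr {a b : ℕ} (h : a % 2 = b % 2) : ((-1 : ℤ)) ^ a = (-1) ^ b := by
  rcases Nat.even_or_odd a with ha | ha
  · have hb : Even b := by rcases ha with ⟨t, ht⟩; exact (Nat.even_iff).2 (by omega)
    rw [ha.neg_one_pow, hb.neg_one_pow]
  · have hb : Odd b := by rcases ha with ⟨t, ht⟩; exact (Nat.odd_iff).2 (by omega)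
    rw [ha.neg_one_pow, hb.neg_one_pow]

lemma iter_swap (α : A → A) (n p : ℕ) (x : A) : α^[n] (α^[p] x) = α^[p] (α^[n] x) := by
  rw [← Function.iterate_add_apply, ← Function.iterate_add_apply, Nat.add_comm]

lemma compat_iterate {α : A → A} {N : ℕ} {g : (Fin N → A) → A} (hg : IsCompat α g) (k : ℕ)
    (x : Fin N → A) : α^[k] (g x) = g fun i => α^[k] (x i) := by
  induction k with
  | zero => simp
  | succ k ih =>
    rw [Function.iterate_succ_apply', ih, hg]
    congr 1; funext i; exact (Function.iterate_succ_apply' α k (x i)).symm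

/-- slot-additivity -/
def SlotAdd [AddCommGroup A] {N : ℕ} (F : (Fin N → A) → A) : Prop :=
  ∀ (x : Fin N → A) (i : Fin N) (y z : A),
    F (Function.update x i (y + z)) = F (Function.update x i y) + F (Function.update x i z)

variable [AddCommGroup A]

/-- the slot hom -/
def slotHom {N : ℕ} {F : (Fin N → A) → A} (hF : SlotAdd F) (x : Fin N → A) (i : Fin N) :
    A →+ A := AddMonoidHom.mk' (fun y => F (Function.update x i y)) (hF x i)

lemma SlotAdd.upd_sum {N : ℕ} {F : (Fin N → A) → A} (hF : SlotAdd F) (x : Fin N → A)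
    (i : Fin N) {ι : Type*} (s : Finset ι) (c : ι → ℤ) (y : ι → A) :
    F (Function.update x i (∑ q ∈ s, c q • y q)) =
      ∑ q ∈ s, c q • F (Function.update x i (y q)) := by
  have := map_sum (slotHom hF x i) (fun q => c q • y q) s
  simp only [slotHom, AddMonoidHom.mk'_apply] at this
  rw [this]
  exact Finset.sum_congr rfl fun q _ => by
    simpa [slotHom] using map_zsmul (slotHom hF x i) (c q) (y q)

lemma SlotAdd.upd_zsmul {N : ℕ} {F : (Fin N → A) → A} (hF : SlotAdd F) (x : Fin N → A)
    (i : Fin N) (c : ℤ) (y : A) :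
    F (Function.update x i (c • y)) = c • F (Function.update x i y) := by
  simpa [slotHom] using map_zsmul (slotHom hF x i) c y

lemma SlotAdd.upd_neg {N : ℕ} {F : (Fin N → A) → A} (hF : SlotAdd F) (x : Fin N → A)
    (i : Fin N) (y : A) :
    F (Function.update x i (-y)) = - F (Function.update x i y) := by
  simpa [slotHom] using map_neg (slotHom hF x i) y

end Helpers



section Circ
variable {A : Type*} [AddCommGroup A] (α : A → A)

/-- the value inserted in slot `i` -/
def gslot {m n : ℕ} (i : Fin (m + 1)) (g : (Fin (n + 1) → A) → A)
    (a : Fin (m + n + 1) → A) : A :=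
  g (fun l => a ⟨(i : ℕ) + (l : ℕ), by omega⟩)

/-- the insertion array with `0` in slot `i` -/
def insBase {m n : ℕ} (i : Fin (m + 1)) (a : Fin (m + n + 1) → A) : Fin (m + 1) → A :=
  fun k => if (k : ℕ) < (i : ℕ) then α^[n] (a ⟨(k : ℕ), by omega⟩)
    else if (k : ℕ) = (i : ℕ) then 0
    else α^[n] (a ⟨(k : ℕ) + n, by omega⟩)

lemma circI_def {m n : ℕ} (i : Fin (m + 1)) (f : (Fin (m + 1) → A) → A)
    (g : (Fin (n + 1) → A) → A) (a : Fin (m + n + 1) → A) :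
    circI α i f g a = f (Function.update (insBase α i a) i (gslot i g a)) := by
  show f _ = _
  congr 1
  funext k
  rcases eq_or_ne k i with hk | hk
  · subst hk
    rw [Function.update_self]
    rw [if_neg (lt_irrefl _), if_pos rfl]
    rfl
  · have hk' : (k : ℕ) ≠ (i : ℕ) := fun h => hk (Fin.ext h)
    rw [Function.update_of_ne hk]
    show _ = insBase α i a k
    unfold insBase
    split_ifs <;> first | rfl | omega

variable {α}

lemma circI_inner_add {m n : ℕ} {F : (Fin (m + 1) → A) → A} (hF : SlotAdd F)
    (i : Fin (m + 1)) (X Y : (Fin (n + 1) → A) → A) (a : Fin (m + n + 1) → A) :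
    circI α i F (fun b => X b + Y b) a = circI α i F X a + circI α i F Y a := by
  simp only [circI_def]
  have : gslot i (fun b => X b + Y b) a = gslot i X a + gslot i Y a := rfl
  rw [this, hF]

lemma circI_inner_zsmul {m n : ℕ} {F : (Fin (m + 1) → A) → A} (hF : SlotAdd F)
    (i : Fin (m + 1)) (c : ℤ) (X : (Fin (n + 1) → A) → A) (a : Fin (m + n + 1) → A) :
    circI α i F (fun b => c • X b) a = c • circI α i F X a := by
  simp only [circI_def]
  have : gslot i (fun b => c • X b) a = c • gslot i X a := rfl
  rw [this, hF.upd_zsmul]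

lemma circI_inner_neg {m n : ℕ} {F : (Fin (m + 1) → A) → A} (hF : SlotAdd F)
    (i : Fin (m + 1)) (X : (Fin (n + 1) → A) → A) (a : Fin (m + n + 1) → A) :
    circI α i F (fun b => - X b) a = - circI α i F X a := by
  simp only [circI_def]
  have : gslot i (fun b => - X b) a = - gslot i X a := rfl
  rw [this, hF.upd_neg]

lemma circI_inner_sum {m n : ℕ} {F : (Fin (m + 1) → A) → A} (hF : SlotAdd F)
    (i : Fin (m + 1)) {ι : Type*} (s : Finset ι) (c : ι → ℤ)
    (G : ι → (Fin (n + 1) → A) → A) (a : Fin (m + n + 1) → A) :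
    circI α i F (fun b => ∑ q ∈ s, c q • G q b) a
      = ∑ q ∈ s, c q • circI α i F (G q) a := by
  simp only [circI_def]
  have : gslot i (fun b => ∑ q ∈ s, c q • G q b) a
      = ∑ q ∈ s, c q • gslot i (G q) a := rfl
  rw [this, hF.upd_sum]

lemma vcirc_inner_add {m n : ℕ} {F : (Fin (m + 1) → A) → A} (hF : SlotAdd F)
    (X Y : (Fin (n + 1) → A) → A) (a : Fin (m + n + 1) → A) :
    vcirc α F (fun b => X b + Y b) a = vcirc α F X a + vcirc α F Y a := by
  simp only [vcirc, circI_inner_add hF, smul_add, Finset.sum_add_distrib]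

lemma vcirc_inner_neg {m n : ℕ} {F : (Fin (m + 1) → A) → A} (hF : SlotAdd F)
    (X : (Fin (n + 1) → A) → A) (a : Fin (m + n + 1) → A) :
    vcirc α F (fun b => - X b) a = - vcirc α F X a := by
  simp only [vcirc, circI_inner_neg hF, smul_neg, Finset.sum_neg_distrib]

lemma vcirc_inner_zsmul {m n : ℕ} {F : (Fin (m + 1) → A) → A} (hF : SlotAdd F)
    (c : ℤ) (X : (Fin (n + 1) → A) → A) (a : Fin (m + n + 1) → A) :
    vcirc α F (fun b => c • X b) a = c • vcirc α F X a := by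
  simp only [vcirc, circI_inner_zsmul hF, Finset.smul_sum]
  exact Finset.sum_congr rfl fun i _ => by rw [smul_smul, smul_smul, mul_comm]

lemma vcirc_outer_add {m n : ℕ} (X Y : (Fin (m + 1) → A) → A)
    (G : (Fin (n + 1) → A) → A) (a : Fin (m + n + 1) → A) :
    vcirc α (fun b => X b + Y b) G a = vcirc α X G a + vcirc α Y G a := by
  simp only [vcirc, circI, smul_add, Finset.sum_add_distrib]

lemma vcirc_outer_neg {m n : ℕ} (X : (Fin (m + 1) → A) → A)
    (G : (Fin (n + 1) → A) → A) (a : Fin (m + n + 1) → A) :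
    vcirc α (fun b => - X b) G a = - vcirc α X G a := by
  simp only [vcirc, circI, smul_neg, Finset.sum_neg_distrib]

lemma vcirc_outer_zsmul {m n : ℕ} (c : ℤ) (X : (Fin (m + 1) → A) → A)
    (G : (Fin (n + 1) → A) → A) (a : Fin (m + n + 1) → A) :
    vcirc α (fun b => c • X b) G a = c • vcirc α X G a := by
  simp only [vcirc, circI, Finset.smul_sum]
  exact Finset.sum_congr rfl fun i _ => by rw [smul_smul, smul_smul, mul_comm]

lemma vcirc_inner_reindex {m n₁ n₂ : ℕ} (en : n₂ = n₁) (F : (Fin (m + 1) → A) → A)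
    (G : (Fin (n₂ + 1) → A) → A) (e : n₂ + 1 = n₁ + 1) (e' : m + n₂ + 1 = m + n₁ + 1)
    (a : Fin (m + n₁ + 1) → A) :
    vcirc α F (fun b => G (reindex e b)) a = vcirc α F G (reindex e' a) := by
  subst en
  simp only [reindex_self]

lemma vcirc_outer_reindex {m₁ m₂ n : ℕ} (em : m₂ = m₁) (F : (Fin (m₂ + 1) → A) → A)
    (G : (Fin (n + 1) → A) → A) (e : m₂ + 1 = m₁ + 1) (e' : m₂ + n + 1 = m₁ + n + 1)
    (a : Fin (m₁ + n + 1) → A) :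
    vcirc α (fun b => F (reindex e b)) G a = vcirc α F G (reindex e' a) := by
  subst em
  simp only [reindex_self]

end Circ



section Nest
variable {A : Type*} (α : A → A) {m n p : ℕ}
variable (f : (Fin (m + 1) → A) → A) (g : (Fin (n + 1) → A) → A) (h : (Fin (p + 1) → A) → A)

lemma circI_nested (i q : ℕ) (hi : i ≤ m) (hq : q ≤ n) (a : Fin (m + n + p + 1) → A) :
    circI α (⟨i + q, by omega⟩ : Fin (m + n + 1)) (circI α (⟨i, by omega⟩ : Fin (m + 1)) f g) h a
      = circI α (⟨i, by omega⟩ : Fin (m + 1)) f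
          (circI α (⟨q, by omega⟩ : Fin (n + 1)) g h) (reindex (by omega) a) := by
  simp only [circI, reindex]
  congr 1
  funext k
  simp only [Fin.cast_mk]
  rcases Nat.lt_trichotomy (k : ℕ) i with h1 | h1 | h1
  · rw [if_pos h1, if_pos h1, if_pos (show (k : ℕ) < i + q by omega),
      Function.iterate_add_apply]
  · rw [if_neg (by omega), if_pos h1, if_neg (by omega), if_pos h1]
    congr 1
    funext l
    rcases Nat.lt_trichotomy (l : ℕ) q with h2 | h2 | h2
    · rw [if_pos (show i + (l : ℕ) < i + q by omega), if_pos h2]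
    · rw [if_neg (by omega), if_pos (show i + (l : ℕ) = i + q by omega),
        if_neg (by omega), if_pos h2]
      congr 1
      funext s
      exact fin_mk_congr a _ _ (by omega)
    · rw [if_neg (by omega), if_neg (by omega), if_neg (by omega), if_neg (by omega)]
      exact congrArg _ (fin_mk_congr a _ _ (by omega))
  · rw [if_neg (by omega), if_neg (by omega), if_neg (by omega), if_neg (by omega),
      if_neg (by omega), if_neg (by omega), Function.iterate_add_apply]
    exact congrArg _ (congrArg _ (fin_mk_congr a _ _ (by omega)))

lemma circI_disjoint (hg : IsCompat α g) (hh : IsCompat α h) (i j : ℕ)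
    (hi : i ≤ m) (hj : j < i) (a : Fin (m + n + p + 1) → A) :
    circI α (⟨j, by omega⟩ : Fin (m + n + 1)) (circI α (⟨i, by omega⟩ : Fin (m + 1)) f g) h a
      = circI α (⟨i + p, by omega⟩ : Fin (m + p + 1))
          (circI α (⟨j, by omega⟩ : Fin (m + 1)) f h) g (reindex (by omega) a) := by
  simp only [circI, reindex, Fin.cast_mk]
  congr 1
  funext k
  split_ifs <;> try omega
  all_goals first
    | (rw [iter_swap α n p]
       try exact congrArg _ (congrArg _ (fin_mk_congr a _ _ (by omega))))
    | (rw [compat_iterate hh n]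
       congr 1
       funext s
       rw [if_pos (by omega)]
       try exact congrArg _ (fin_mk_congr a _ _ (by omega)))
    | (rw [compat_iterate hg p]
       congr 1
       funext l
       rw [if_neg (by omega), if_neg (by omega)]
       try exact congrArg _ (fin_mk_congr a _ _ (by omega)))

end Nest



section PreLie
variable {A : Type*} [AddCommGroup A] (α : A → A) {m n p : ℕ}
variable (f : (Fin (m + 1) → A) → A) (g : (Fin (n + 1) → A) → A) (h : (Fin (p + 1) → A) → A)

lemma sgn_add_two_mul (a c : ℕ) : ((-1 : ℤ)) ^ (a + 2 * c) = (-1) ^ a := by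
  rw [pow_add, pow_mul, neg_one_sq, one_pow, mul_one]

/-- expansion of `(f ∘ g) ∘ h` as a double sum -/
lemma expand_left (a : Fin (m + n + p + 1) → A) :
    vcirc α (vcirc α f g) h a
      = ∑ x : Fin (m + n + 1) × Fin (m + 1),
          ((-1 : ℤ) ^ (p * (x.1 : ℕ) + n * (x.2 : ℕ))) •
            circI α x.1 (circI α x.2 f g) h a := by
  rw [vcirc, Fintype.sum_prod_type]
  refine Finset.sum_congr rfl fun j _ => ?_
  have h1 : circI α j (vcirc α f g) h a
      = ∑ i : Fin (m + 1), ((-1 : ℤ) ^ (n * (i : ℕ))) • circI α j (circI α i f g) h a := by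
    rw [circI_def, vcirc]
    refine Finset.sum_congr rfl fun i _ => ?_
    conv_rhs => rw [circI_def]
  rw [h1, Finset.smul_sum]
  refine Finset.sum_congr rfl fun i _ => ?_
  rw [smul_smul, ← pow_add]

/-- expansion of `f ∘ (g ∘ h)` as a double sum -/
lemma expand_right (hF : SlotAdd f) (e₁ : m + (n + p) + 1 = m + n + p + 1)
    (a : Fin (m + n + p + 1) → A) :
    vcirc α f (vcirc α g h) (reindex e₁ a)
      = ∑ x : Fin (m + 1) × Fin (n + 1),
          ((-1 : ℤ) ^ ((n + p) * (x.1 : ℕ) + p * (x.2 : ℕ))) •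
            circI α x.1 f (circI α x.2 g h) (reindex e₁ a) := by
  rw [vcirc, Fintype.sum_prod_type]
  refine Finset.sum_congr rfl fun i _ => ?_
  have hv : vcirc α g h
      = fun b => ∑ q : Fin (n + 1), ((-1 : ℤ) ^ (p * (q : ℕ))) • circI α q g h b := rfl
  rw [hv, circI_inner_sum hF i Finset.univ (fun q : Fin (n + 1) => ((-1 : ℤ) ^ (p * (q : ℕ))))
    (fun q => circI α q g h) (reindex e₁ a), Finset.smul_sum]
  refine Finset.sum_congr rfl fun q _ => ?_
  rw [smul_smul, ← pow_add]

lemma nested_part (hF : SlotAdd f) (e₁ : m + (n + p) + 1 = m + n + p + 1)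
    (a : Fin (m + n + p + 1) → A) :
    ∑ x ∈ Finset.univ.filter
        (fun x : Fin (m + n + 1) × Fin (m + 1) =>
          (x.2 : ℕ) ≤ (x.1 : ℕ) ∧ (x.1 : ℕ) ≤ (x.2 : ℕ) + n),
      ((-1 : ℤ) ^ (p * (x.1 : ℕ) + n * (x.2 : ℕ))) • circI α x.1 (circI α x.2 f g) h a
      = vcirc α f (vcirc α g h) (reindex e₁ a) := by
  classical
  rw [expand_right α f g h hF e₁ a]
  refine (Finset.sum_nbij' (fun x => (x.2, ⟨min ((x.1 : ℕ) - (x.2 : ℕ)) n, by omega⟩))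
    (fun y => (⟨(y.1 : ℕ) + (y.2 : ℕ), by omega⟩, y.1)) ?_ ?_ ?_ ?_ ?_)
  · intro x hx
    exact Finset.mem_univ _
  · intro y _
    simp only [Finset.mem_filter, Finset.mem_univ, true_and]
    first | omega | (dsimp only; omega) | (simp; omega)
  · intro x hx
    simp only [Finset.mem_filter, Finset.mem_univ, true_and] at hx
    refine Prod.ext (Fin.ext ?_) rfl
    first | omega | (dsimp only; omega) | (simp; omega)
  · intro y _
    refine Prod.ext rfl (Fin.ext ?_)
    first | omega | (dsimp only; omega) | (simp; omega)
  · intro x hx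
    simp only [Finset.mem_filter, Finset.mem_univ, true_and] at hx
    obtain ⟨⟨jv, hjv⟩, ⟨iv, hiv⟩⟩ := x
    dsimp only at hx ⊢
    obtain ⟨d, rfl⟩ : ∃ d, jv = iv + d := ⟨jv - iv, by omega⟩
    have hd : d ≤ n := by omega
    rw [circI_nested α f g h iv d (by omega) hd a]
    have hcast : (reindex (by omega : m + (n + p) + 1 = m + n + p + 1) a) = reindex e₁ a := rfl
    rw [hcast]
    have hmin : (⟨min (iv + d - iv) n, by omega⟩ : Fin (n + 1)) = ⟨d, by omega⟩ :=
      Fin.ext (by dsimp only; omega)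
    rw [hmin]
    rw [show (iv + d - iv) ⊓ n = d from by omega,
      show p * (iv + d) + n * iv = (n + p) * iv + p * d by ring]

lemma nonnested_part (hg : IsCompat α g) (hh : IsCompat α h)
    (e₂ : m + p + n + 1 = m + n + p + 1) (a : Fin (m + n + p + 1) → A) :
    ∑ x ∈ Finset.univ.filter
        (fun x : Fin (m + n + 1) × Fin (m + 1) =>
          ¬((x.2 : ℕ) ≤ (x.1 : ℕ) ∧ (x.1 : ℕ) ≤ (x.2 : ℕ) + n)),
      ((-1 : ℤ) ^ (p * (x.1 : ℕ) + n * (x.2 : ℕ))) • circI α x.1 (circI α x.2 f g) h a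
      = ∑ x ∈ Finset.univ.filter
          (fun x : Fin (m + p + 1) × Fin (m + 1) =>
            ¬((x.2 : ℕ) ≤ (x.1 : ℕ) ∧ (x.1 : ℕ) ≤ (x.2 : ℕ) + p)),
        ((-1 : ℤ) ^ (n * p)) • (((-1 : ℤ) ^ (n * (x.1 : ℕ) + p * (x.2 : ℕ))) •
          circI α x.1 (circI α x.2 f h) g (reindex e₂ a)) := by
  classical
  refine (Finset.sum_nbij'
    (fun x => if hc : (x.1 : ℕ) < (x.2 : ℕ)
      then ((⟨(x.2 : ℕ) + p, by omega⟩ : Fin (m + p + 1)), (⟨(x.1 : ℕ), by omega⟩ : Fin (m + 1)))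
      else ((⟨(x.2 : ℕ), by omega⟩ : Fin (m + p + 1)), (⟨(x.1 : ℕ) - n, by omega⟩ : Fin (m + 1))))
    (fun x => if hc : (x.1 : ℕ) < (x.2 : ℕ)
      then ((⟨(x.2 : ℕ) + n, by omega⟩ : Fin (m + n + 1)), (⟨(x.1 : ℕ), by omega⟩ : Fin (m + 1)))
      else ((⟨(x.2 : ℕ), by omega⟩ : Fin (m + n + 1)), (⟨(x.1 : ℕ) - p, by omega⟩ : Fin (m + 1))))
    ?_ ?_ ?_ ?_ ?_)
  · intro x hx
    simp only [Finset.mem_filter, Finset.mem_univ, true_and] at hx ⊢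
    obtain ⟨⟨jv, hjv⟩, ⟨iv, hiv⟩⟩ := x
    dsimp only at hx ⊢
    split_ifs with hc <;> dsimp only <;> omega
  · intro x hx
    simp only [Finset.mem_filter, Finset.mem_univ, true_and] at hx ⊢
    obtain ⟨⟨jv, hjv⟩, ⟨iv, hiv⟩⟩ := x
    dsimp only at hx ⊢
    split_ifs with hc <;> dsimp only <;> omega
  · intro x hx
    simp only [Finset.mem_filter, Finset.mem_univ, true_and] at hx
    obtain ⟨⟨jv, hjv⟩, ⟨iv, hiv⟩⟩ := x
    dsimp only at hx ⊢
    by_cases hc : jv < iv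
    · rw [dif_pos hc]
      dsimp only
      rw [dif_neg (by omega)]
      refine Prod.ext (Fin.ext ?_) (Fin.ext ?_) <;> dsimp only <;> omega
    · rw [dif_neg hc]
      dsimp only
      rw [dif_pos (by omega)]
      refine Prod.ext (Fin.ext ?_) (Fin.ext ?_) <;> dsimp only <;> omega
  · intro x hx
    simp only [Finset.mem_filter, Finset.mem_univ, true_and] at hx
    obtain ⟨⟨jv, hjv⟩, ⟨iv, hiv⟩⟩ := x
    dsimp only at hx ⊢
    by_cases hc : jv < iv
    · rw [dif_pos hc]
      dsimp only
      rw [dif_neg (by omega)]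
      refine Prod.ext (Fin.ext ?_) (Fin.ext ?_) <;> dsimp only <;> omega
    · rw [dif_neg hc]
      dsimp only
      rw [dif_pos (by omega)]
      refine Prod.ext (Fin.ext ?_) (Fin.ext ?_) <;> dsimp only <;> omega
  · intro x hx
    simp only [Finset.mem_filter, Finset.mem_univ, true_and] at hx
    obtain ⟨⟨jv, hjv⟩, ⟨iv, hiv⟩⟩ := x
    dsimp only at hx ⊢
    by_cases hc : jv < iv
    · rw [dif_pos hc]
      rw [circI_disjoint α f g h hg hh iv jv (by omega) hc a]
      rw [smul_smul, ← pow_add,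
        show n * p + (n * (iv + p) + p * jv) = (p * jv + n * iv) + 2 * (n * p) by ring,
        sgn_add_two_mul]
    · rw [dif_neg hc]
      obtain ⟨d, rfl⟩ : ∃ d, jv = d + n := ⟨jv - n, by omega⟩
      have hd : iv < d := by omega
      simp only [Nat.add_sub_cancel]
      rw [circI_disjoint α f h g hh hg d iv (by omega) hd (reindex e₂ a)]
      rw [smul_smul, ← pow_add,
        show n * p + (n * iv + p * d) = p * (d + n) + n * iv by ring]
      rfl

theorem preLie (hF : SlotAdd f) (hg : IsCompat α g) (hh : IsCompat α h)
    (e₁ : m + (n + p) + 1 = m + n + p + 1) (e₂ : m + p + n + 1 = m + n + p + 1)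
    (e₃ : m + (p + n) + 1 = m + n + p + 1)
    (a : Fin (m + n + p + 1) → A) :
    vcirc α (vcirc α f g) h a - vcirc α f (vcirc α g h) (reindex e₁ a)
      = ((-1 : ℤ) ^ (n * p)) •
          (vcirc α (vcirc α f h) g (reindex e₂ a)
            - vcirc α f (vcirc α h g) (reindex e₃ a)) := by
  classical
  rw [expand_left α f g h a,
    ← Finset.sum_filter_add_sum_filter_not Finset.univ
      (fun x : Fin (m + n + 1) × Fin (m + 1) =>
        (x.2 : ℕ) ≤ (x.1 : ℕ) ∧ (x.1 : ℕ) ≤ (x.2 : ℕ) + n) _,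
    nested_part α f g h hF e₁ a, add_sub_cancel_left]
  have hrw : vcirc α (vcirc α f h) g (reindex e₂ a)
      = ∑ x : Fin (m + p + 1) × Fin (m + 1),
          ((-1 : ℤ) ^ (n * (x.1 : ℕ) + p * (x.2 : ℕ))) •
            circI α x.1 (circI α x.2 f h) g (reindex e₂ a) :=
    expand_left α f h g (reindex e₂ a)
  have hrw2 : vcirc α f (vcirc α h g) (reindex e₃ a)
      = ∑ x ∈ Finset.univ.filter
          (fun x : Fin (m + p + 1) × Fin (m + 1) =>
            (x.2 : ℕ) ≤ (x.1 : ℕ) ∧ (x.1 : ℕ) ≤ (x.2 : ℕ) + p),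
        ((-1 : ℤ) ^ (n * (x.1 : ℕ) + p * (x.2 : ℕ))) •
          circI α x.1 (circI α x.2 f h) g (reindex e₂ a) :=
    (nested_part α f h g hF (by omega) (reindex e₂ a)).symm
  rw [hrw, hrw2,
    ← Finset.sum_filter_add_sum_filter_not Finset.univ
      (fun x : Fin (m + p + 1) × Fin (m + 1) =>
        (x.2 : ℕ) ≤ (x.1 : ℕ) ∧ (x.1 : ℕ) ≤ (x.2 : ℕ) + p) _,
    add_sub_cancel_left, Finset.smul_sum]
  exact nonnested_part α f g h hg hh e₂ a

end PreLie

section Delta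
variable {A : Type*} [AddCommGroup A]

/-- the multiplication as a 2-cochain -/
def mu2 (μ : A → A → A) : (Fin (1 + 1) → A) → A := fun a => μ (a 0) (a 1)

lemma mu2_compat {μ : A → A → A} {α : A → A} (hmult : ∀ a b : A, α (μ a b) = μ (α a) (α b)) :
    IsCompat α (mu2 μ) := fun a => hmult (a 0) (a 1)

lemma delta_eq (μ : A → A → A) (α : A → A) {N : ℕ} (F : (Fin (N + 1) → A) → A) :
    homDelta μ α (N + 1) F = fun a => - vbracket α F (mu2 μ) a := by
  funext a
  rw [homDelta, vbracket, neg_sub]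
  have h2 : vcirc α (mu2 μ) F (reindex (by omega : 1 + N + 1 = N + 1 + 1) a)
      = circI α 0 (mu2 μ) F (reindex (by omega) a)
        + ((-1 : ℤ) ^ N) • circI α 1 (mu2 μ) F (reindex (by omega) a) := by
    rw [vcirc, Fin.sum_univ_two]
    norm_num
  rw [h2]
  have hT0 : circI α 1 (mu2 μ) F (reindex (by omega : 1 + N + 1 = N + 1 + 1) a)
      = μ (α^[N] (a 0)) (F fun i => a i.succ) := by
    show μ _ _ = _
    norm_num [reindex]
    exact congrArg (fun t => μ (α^[N] (a 0)) (F t))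
      (funext fun l => congrArg a (Fin.ext (by simp [Fin.val_succ]; omega)))
  have hTlast : circI α 0 (mu2 μ) F (reindex (by omega : 1 + N + 1 = N + 1 + 1) a)
      = μ (F fun i => a i.castSucc) (α^[N] (a (Fin.last (N + 1)))) := by
    show μ _ _ = _
    norm_num [reindex]
    exact congrArg₂ μ (congrArg F (funext fun l => congrArg a (Fin.ext (by simp))))
      (congrArg (α^[N]) (congrArg a (Fin.ext (by simp [Fin.val_last]; omega))))
  have hMid : ∀ i : Fin (N + 1), circI α i F (mu2 μ) a
      = F (fun j => if (j : ℕ) < (i : ℕ) then α (a j.castSucc)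
          else if (j : ℕ) = (i : ℕ) then μ (a j.castSucc) (a j.succ)
          else α (a j.succ)) := by
    intro i
    refine congrArg F (funext fun j => ?_)
    rcases Nat.lt_trichotomy (j : ℕ) (i : ℕ) with hj | hj | hj
    · rw [if_pos hj, if_pos hj, Function.iterate_one]
      exact congrArg α (congrArg a (Fin.ext (by simp)))
    · rw [if_neg (by omega), if_pos hj, if_neg (by omega), if_pos hj]
      show μ _ _ = _
      refine congrArg₂ μ (congrArg a (Fin.ext ?_)) (congrArg a (Fin.ext ?_)) <;>
        (dsimp only; simp only [Fin.coe_castSucc, Fin.val_succ, Fin.val_zero, Fin.val_one];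
         omega)
    · rw [if_neg (by omega), if_neg (by omega), if_neg (by omega), if_neg (by omega),
        Function.iterate_one]
      exact congrArg α (congrArg a (Fin.ext (by simp <;> omega)))
  have hMidSum : (∑ i : Fin (N + 1), ((-1 : ℤ) ^ ((i : ℕ) + 1)) •
        F (fun j => if (j : ℕ) < (i : ℕ) then α (a j.castSucc)
          else if (j : ℕ) = (i : ℕ) then μ (a j.castSucc) (a j.succ)
          else α (a j.succ)))
      = - vcirc α F (mu2 μ) a := by
    rw [vcirc, ← Finset.sum_neg_distrib]
    refine Finset.sum_congr rfl fun i _ => ?_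
    rw [hMid i, Nat.one_mul, pow_succ, mul_neg_one, neg_smul]
  rw [Nat.add_sub_cancel, Nat.mul_one, ← hT0, ← hTlast, hMidSum]
  have s1 : ((-1 : ℤ)) ^ (N + 1 + 1) = (-1) ^ N := by
    rw [pow_succ, pow_succ, mul_neg_one, mul_neg_one, neg_neg]
  have s2 : ((-1 : ℤ)) ^ N * (-1) ^ N = 1 := by
    rw [← pow_add]
    exact Even.neg_one_pow ⟨N, by ring⟩
  rw [s1, smul_add, smul_smul, s2, one_smul]
  abel

end Delta

section Comb
variable {A : Type*} [AddCommGroup A] {α : A → A}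

lemma vcirc_outer_comb {m₁ m n : ℕ} (em : m₁ = m) (X : (Fin (m + 1) → A) → A) (c : ℤ)
    (Y : (Fin (m₁ + 1) → A) → A) (e : m₁ + 1 = m + 1) (G : (Fin (n + 1) → A) → A)
    (e' : m₁ + n + 1 = m + n + 1) (a : Fin (m + n + 1) → A) :
    vcirc α (fun b => X b - c • Y (reindex e b)) G a
      = vcirc α X G a - c • vcirc α Y G (reindex e' a) := by
  subst em
  simp only [reindex_self]
  have h1 : (fun b => X b - c • Y b) = fun b => X b + (-c) • Y b := by
    funext b; rw [neg_smul, sub_eq_add_neg]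
  rw [h1, vcirc_outer_add, vcirc_outer_zsmul, neg_smul, ← sub_eq_add_neg]

lemma vcirc_inner_comb {n₁ n m : ℕ} (en : n₁ = n) {F : (Fin (m + 1) → A) → A}
    (hF : SlotAdd F) (X : (Fin (n + 1) → A) → A) (c : ℤ) (Y : (Fin (n₁ + 1) → A) → A)
    (e : n₁ + 1 = n + 1) (e' : m + n₁ + 1 = m + n + 1) (a : Fin (m + n + 1) → A) :
    vcirc α F (fun b => X b - c • Y (reindex e b)) a
      = vcirc α F X a - c • vcirc α F Y (reindex e' a) := by
  subst en
  simp only [reindex_self]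
  have h1 : (fun b => X b - c • Y b) = fun b => X b + (-c) • Y b := by
    funext b; rw [neg_smul, sub_eq_add_neg]
  rw [h1, vcirc_inner_add hF, vcirc_inner_zsmul hF, neg_smul, ← sub_eq_add_neg]

end Comb


/-- In a multiplicative hom-associative algebra, for `f ∈ C^{m+1}_α(A,A)` and
`g ∈ C^{n+1}_α(A,A)`, `δ_α [f,g]_α = (-1)^{(n+1)+1} [δ_α f, g]_α + [f, δ_α g]_α`. -/
theorem homDelta_bracket_Leibniz
    {K : Type*} [Field K] [CharZero K] {A : Type*} [AddCommGroup A] [Module K A]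
    (μ : A →ₗ[K] A →ₗ[K] A) (α : A →ₗ[K] A)
    (hassoc : ∀ a b c : A, μ (α a) (μ b c) = μ (μ a b) (α c))
    (hmult : ∀ a b : A, α (μ a b) = μ (α a) (α b))
    (m n : ℕ)
    (f : MultilinearMap K (fun _ : Fin (m + 1) => A) A)
    (g : MultilinearMap K (fun _ : Fin (n + 1) => A) A)
    (hf : IsCompat (⇑α) (⇑f)) (hg : IsCompat (⇑α) (⇑g)) :
    ∀ a : Fin (m + n + 2) → A,
      homDelta (fun x y => μ x y) (⇑α) (m + n + 1) (vbracket (⇑α) (⇑f) (⇑g)) a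
        = ((-1 : ℤ) ^ (n + 2)) •
            vbracket (⇑α) (homDelta (fun x y => μ x y) (⇑α) (m + 1) (⇑f)) (⇑g)
              (reindex (by omega) a)
          + vbracket (⇑α) (⇑f) (homDelta (fun x y => μ x y) (⇑α) (n + 1) (⇑g)) a := by
  intro a
  have hSF : SlotAdd (⇑f) := fun x i y z => f.map_update_add x i y z
  have hSG : SlotAdd (⇑g) := fun x i y z => g.map_update_add x i y z
  have hSU : SlotAdd (mu2 (fun x y => μ x y)) := by
    intro x i y z
    match i with
    | ⟨0, _⟩ => simp [mu2, Function.update, map_add]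
    | ⟨1, _⟩ => simp [mu2, Function.update, map_add]
  have hCU : IsCompat (⇑α) (mu2 (fun x y => μ x y)) := mu2_compat fun a b => hmult a b
  rw [delta_eq (fun x y => μ x y) (⇑α) (vbracket (⇑α) (⇑f) (⇑g)),
      delta_eq (fun x y => μ x y) (⇑α) (⇑f), delta_eq (fun x y => μ x y) (⇑α) (⇑g)]
  show -vbracket (⇑α) (vbracket ⇑α ⇑f ⇑g) (mu2 fun x y => (μ x) y) a = _
  have hbneg1 : vbracket (⇑α) (fun b => -vbracket (⇑α) (⇑f) (mu2 fun x y => (μ x) y) b) (⇑g)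
        (reindex (by omega : m + 1 + n + 1 = m + n + 2) a)
      = -vbracket (⇑α) (vbracket (⇑α) (⇑f) (mu2 fun x y => (μ x) y)) (⇑g)
          (reindex (by omega) a) := by
    rw [vbracket, vbracket, vcirc_outer_neg, vcirc_inner_neg hSG, smul_neg]
    abel
  have hbneg2 : vbracket (⇑α) (⇑f) (fun b => -vbracket (⇑α) (⇑g) (mu2 fun x y => (μ x) y) b) a
      = -vbracket (⇑α) (⇑f) (vbracket (⇑α) (⇑g) (mu2 fun x y => (μ x) y)) a := by
    rw [vbracket, vbracket, vcirc_inner_neg hSF, vcirc_outer_neg, smul_neg]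
    abel
  rw [hbneg1, hbneg2, smul_neg, ← neg_add, neg_inj]
  have hB_FG : vbracket (⇑α) (⇑f) (⇑g)
      = fun b => vcirc (⇑α) (⇑f) (⇑g) b
          - ((-1 : ℤ) ^ (m * n)) • vcirc (⇑α) (⇑g) (⇑f) (reindex (by omega) b) := rfl
  have hB_FU : vbracket (⇑α) (⇑f) (mu2 fun x y => (μ x) y)
      = fun b => vcirc (⇑α) (⇑f) (mu2 fun x y => (μ x) y) b
          - ((-1 : ℤ) ^ (m * 1)) •
              vcirc (⇑α) (mu2 fun x y => (μ x) y) (⇑f) (reindex (by omega) b) := rfl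
  have hB_GU : vbracket (⇑α) (⇑g) (mu2 fun x y => (μ x) y)
      = fun b => vcirc (⇑α) (⇑g) (mu2 fun x y => (μ x) y) b
          - ((-1 : ℤ) ^ (n * 1)) •
              vcirc (⇑α) (mu2 fun x y => (μ x) y) (⇑g) (reindex (by omega) b) := rfl
  rw [vbracket, vbracket, vbracket, hB_FG, hB_FU, hB_GU]
  rw [vcirc_outer_comb (show n + m = m + n by omega) (vcirc (⇑α) (⇑f) (⇑g))
        ((-1 : ℤ) ^ (m * n)) (vcirc (⇑α) (⇑g) (⇑f)) (by omega)
        (mu2 fun x y => (μ x) y) (by omega) a,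
      vcirc_inner_comb (show n + m = m + n by omega) hSU (vcirc (⇑α) (⇑f) (⇑g))
        ((-1 : ℤ) ^ (m * n)) (vcirc (⇑α) (⇑g) (⇑f)) (by omega) (by omega)
        (reindex (by omega) a),
      vcirc_outer_comb (show 1 + m = m + 1 by omega)
        (vcirc (⇑α) (⇑f) (mu2 fun x y => (μ x) y)) ((-1 : ℤ) ^ (m * 1))
        (vcirc (⇑α) (mu2 fun x y => (μ x) y) (⇑f)) (by omega) (⇑g) (by omega)
        (reindex (by omega) a),
      vcirc_inner_comb (show 1 + m = m + 1 by omega) hSG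
        (vcirc (⇑α) (⇑f) (mu2 fun x y => (μ x) y)) ((-1 : ℤ) ^ (m * 1))
        (vcirc (⇑α) (mu2 fun x y => (μ x) y) (⇑f)) (by omega) (by omega)
        (reindex (by omega) (reindex (by omega) a)),
      vcirc_inner_comb (show 1 + n = n + 1 by omega) hSF
        (vcirc (⇑α) (⇑g) (mu2 fun x y => (μ x) y)) ((-1 : ℤ) ^ (n * 1))
        (vcirc (⇑α) (mu2 fun x y => (μ x) y) (⇑g)) (by omega) (by omega) a,
      vcirc_outer_comb (show 1 + n = n + 1 by omega)
        (vcirc (⇑α) (⇑g) (mu2 fun x y => (μ x) y)) ((-1 : ℤ) ^ (n * 1))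
        (vcirc (⇑α) (mu2 fun x y => (μ x) y) (⇑g)) (by omega) (⇑f) (by omega)
        (reindex (by omega) a)]
  simp only [reindex_reindex]
  have R1 : vcirc (⇑α) (vcirc ⇑α ⇑f ⇑g) (mu2 fun x y => (μ x) y) a
      = ((-1 : ℤ) ^ (n * 1)) •
          (vcirc (⇑α) (vcirc (⇑α) (⇑f) (mu2 fun x y => (μ x) y)) (⇑g) (reindex (by omega) a)
            - vcirc (⇑α) (⇑f) (vcirc (⇑α) (mu2 fun x y => (μ x) y) (⇑g)) (reindex (by omega) a))
        + vcirc (⇑α) (⇑f) (vcirc (⇑α) (⇑g) (mu2 fun x y => (μ x) y)) a :=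
    eq_add_of_sub_eq (preLie (⇑α) (⇑f) (⇑g) (mu2 fun x y => (μ x) y) hSF hg hCU
      (by omega) (by omega) (by omega) a)
  have R2 : vcirc (⇑α) (vcirc ⇑α ⇑g ⇑f) (mu2 fun x y => (μ x) y) (reindex (by omega) a)
      = ((-1 : ℤ) ^ (m * 1)) •
          (vcirc (⇑α) (vcirc (⇑α) (⇑g) (mu2 fun x y => (μ x) y)) (⇑f) (reindex (by omega) a)
            - vcirc (⇑α) (⇑g) (vcirc (⇑α) (mu2 fun x y => (μ x) y) (⇑f)) (reindex (by omega) a))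
        + vcirc (⇑α) (⇑g) (vcirc (⇑α) (⇑f) (mu2 fun x y => (μ x) y)) (reindex (by omega) a) :=
    eq_add_of_sub_eq (preLie (⇑α) (⇑g) (⇑f) (mu2 fun x y => (μ x) y) hSG hf hCU
      (by omega) (by omega) (by omega) (reindex (by omega) a))
  have R3 : vcirc (⇑α) (vcirc (⇑α) (mu2 fun x y => (μ x) y) ⇑f) (⇑g) (reindex (by omega) a)
      = ((-1 : ℤ) ^ (m * n)) •
          (vcirc (⇑α) (vcirc (⇑α) (mu2 fun x y => (μ x) y) ⇑g) (⇑f) (reindex (by omega) a)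
            - vcirc (⇑α) (mu2 fun x y => (μ x) y) (vcirc ⇑α ⇑g ⇑f) (reindex (by omega) a))
        + vcirc (⇑α) (mu2 fun x y => (μ x) y) (vcirc ⇑α ⇑f ⇑g) (reindex (by omega) a) :=
    eq_add_of_sub_eq (preLie (⇑α) (mu2 fun x y => (μ x) y) (⇑f) (⇑g) hSU hf hg
      (by omega) (by omega) (by omega) (reindex (by omega) a))
  rw [R1, R2, R3]
  simp only [Nat.mul_one, show (m + 1) * n = m * n + n from by ring,
    show m * (n + 1) = m * n + m from by ring, pow_add]
  match_scalars <;> try ring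
  all_goals
    rw [show ((-1 : ℤ)) ^ (n * 2) = 1 from by rw [mul_comm, pow_mul]; norm_num]
  all_goals ring
end

section
/- In a multiplicative hom-associative algebra (A, μ, α), the cup product (f ∪_α g)(a₁,…,a_{m+n}) = μ(α^{n-1} f(a₁,…,a_m), α^{m-1} g(a_{m+1},…,a_{m+n})) maps C^m_α(A,A) × Cⁿ_α(A,A) into C^{m+n}_α(A,A) and is associative: f ∪_α (g ∪_α h) = (f ∪_α g) ∪_α h. -/
/-- In a multiplicative hom-associative algebra, the cup product maps
`C^{m+1}_α × C^{n+1}_α` into `C^{m+n+2}_α` and is associative. -/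
theorem cupProd_mem_and_assoc
    {K : Type*} [Field K] [CharZero K] {A : Type*} [AddCommGroup A] [Module K A]
    (μ : A →ₗ[K] A →ₗ[K] A) (α : A →ₗ[K] A)
    (hassoc : ∀ a b c : A, μ (α a) (μ b c) = μ (μ a b) (α c))
    (hmult : ∀ a b : A, α (μ a b) = μ (α a) (α b))
    (m n p : ℕ)
    (f : MultilinearMap K (fun _ : Fin (m + 1) => A) A)
    (g : MultilinearMap K (fun _ : Fin (n + 1) => A) A)
    (h : MultilinearMap K (fun _ : Fin (p + 1) => A) A)
    (hf : IsCompat (⇑α) (⇑f)) (hg : IsCompat (⇑α) (⇑g)) (hh : IsCompat (⇑α) (⇑h)) :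
    (∃ M : MultilinearMap K (fun _ : Fin (m + n + 2) => A) A,
        ⇑M = cupProd (fun x y => μ x y) (⇑α) (⇑f) (⇑g)) ∧
    IsCompat (⇑α) (cupProd (fun x y => μ x y) (⇑α) (⇑f) (⇑g)) ∧
    ∀ a : Fin (m + n + p + 3) → A,
      cupProd (fun x y => μ x y) (⇑α) (⇑f)
          (cupProd (fun x y => μ x y) (⇑α) (⇑g) (⇑h)) (reindex (by omega) a)
        = cupProd (fun x y => μ x y) (⇑α)
            (cupProd (fun x y => μ x y) (⇑α) (⇑f) (⇑g)) (⇑h)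
            (reindex (by omega) a) := by
  classical
  have hmiter : ∀ (k : ℕ) (a b : A), α^[k] (μ a b) = μ (α^[k] a) (α^[k] b) := by
    intro k
    induction k with
    | zero => intro a b; simp
    | succ k ih =>
      intro a b
      rw [Function.iterate_succ_apply', ih, hmult, Function.iterate_succ_apply',
        Function.iterate_succ_apply']
  have key : ∀ F G H : A,
      μ (α^[n + p + 1] F) (α^[m] (μ (α^[p] G) (α^[n] H)))
        = μ (α^[p] (μ (α^[n] F) (α^[m] G))) (α^[m + n + 1] H) := by
    intro F G H
    have L : μ (α^[n + p + 1] F) (α^[m] (μ (α^[p] G) (α^[n] H)))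
        = μ (α (α^[n + p] F)) (μ (α^[m + p] G) (α^[m + n] H)) := by
      rw [hmiter m, ← Function.iterate_add_apply, ← Function.iterate_add_apply,
        ← Function.iterate_succ_apply' α (n + p)]
    have R : μ (α^[p] (μ (α^[n] F) (α^[m] G))) (α^[m + n + 1] H)
        = μ (μ (α^[n + p] F) (α^[m + p] G)) (α (α^[m + n] H)) := by
      rw [hmiter p, ← Function.iterate_add_apply, ← Function.iterate_add_apply,
        ← Function.iterate_succ_apply' α (m + n), Nat.add_comm p n, Nat.add_comm p m]
    rw [L, R, hassoc]
  refine ⟨?_, ?_, ?_⟩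
  · let F : MultilinearMap K (fun _ : Fin (m + 1) => A) A := (α ^ n).compMultilinearMap f
    let G : MultilinearMap K (fun _ : Fin (n + 1) => A) A := (α ^ m).compMultilinearMap g
    let e : (Fin (m + 1) ⊕ Fin (n + 1)) ≃ Fin (m + n + 2) :=
      finSumFinEquiv.trans (finCongr (by omega))
    refine ⟨((TensorProduct.lift μ).compMultilinearMap (F.domCoprod G)).domDomCongr e, ?_⟩
    funext a
    simp only [MultilinearMap.domDomCongr_apply, LinearMap.compMultilinearMap_apply,
      MultilinearMap.domCoprod_apply, TensorProduct.lift.tmul, cupProd,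
      Module.End.pow_apply, F, G]
    congr 2 <;>
      first
        | rfl
        | (funext i; congr 1; simp [e, Fin.ext_iff])
  · intro a
    simp only [cupProd]
    rw [hmult, ← Function.iterate_succ_apply' α n, Function.iterate_succ_apply α n, hf,
      ← Function.iterate_succ_apply' α m, Function.iterate_succ_apply α m, hg]
  · intro a
    simp only [cupProd, reindex, Fin.cast_mk]
    have e1 : ∀ i : ℕ, m + 1 + (n + 1 + i) = m + n + 1 + 1 + i := by omega
    simp only [e1]
    exact key _ _ _
end

section
/- In a multiplicative hom-associative algebra (A, μ, α), the coboundary δ_α is a graded derivation of the cup product: δ_α(f ∪_α g) = (δ_α f) ∪_α g + (-1)^m f ∪_α (δ_α g) for f ∈ C^m_α(A,A), g ∈ Cⁿ_α(A,A). Consequently, ∪_α induces an associative product on H•_α(A,A). -/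
private theorem keylemma
    {K : Type*} [Field K] [CharZero K] {A : Type*} [AddCommGroup A] [Module K A]
    (μ : A →ₗ[K] A →ₗ[K] A) (α : A →ₗ[K] A)
    (hassoc : ∀ a b c : A, μ (α a) (μ b c) = μ (μ a b) (α c))
    (hmult : ∀ a b : A, α (μ a b) = μ (α a) (α b))
    (m n : ℕ)
    (f : MultilinearMap K (fun _ : Fin (m + 1) => A) A)
    (g : MultilinearMap K (fun _ : Fin (n + 1) => A) A)
    (hf : IsCompat (⇑α) (⇑f)) (hg : IsCompat (⇑α) (⇑g)) :
    (∀ a : Fin (m + n + 3) → A,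
      homDelta (fun x y => μ x y) (⇑α) (m + n + 2)
          (cupProd (fun x y => μ x y) (⇑α) (⇑f) (⇑g)) a
        = cupProd (fun x y => μ x y) (⇑α)
            (homDelta (fun x y => μ x y) (⇑α) (m + 1) (⇑f)) (⇑g)
            (reindex (by ring) a)
          + ((-1 : ℤ) ^ (m + 1)) •
              cupProd (fun x y => μ x y) (⇑α) (⇑f)
                (homDelta (fun x y => μ x y) (⇑α) (n + 1) (⇑g)) a) := by
  intro a
  obtain ⟨b, hb⟩ : ∃ b : ℕ → A, ∀ i : Fin (m+n+3), a i = b ↑i :=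
    ⟨fun v => if h : v < m+n+3 then a ⟨v,h⟩ else 0, fun i => by simp [i.isLt]⟩
  simp only [homDelta, cupProd, reindex, hb, Fin.coe_cast, Fin.val_succ, Fin.coe_castSucc,
    Fin.val_zero, Fin.val_last, Fin.isValue]
  simp only [show m+n+2-1 = m+n+1 from rfl, show m+1-1 = m from rfl, show n+1-1 = n from rfl,
    add_zero, ← Module.End.pow_apply]
  simp only [map_add, map_sum, map_zsmul, LinearMap.add_apply, LinearMap.sum_apply,
    LinearMap.smul_apply, smul_add, Finset.smul_sum, smul_smul, Fin.sum_univ_eq_sum_range]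
  have powadd : ∀ (j k : ℕ) (x : A), (α^(j+k)) x = (α^j) ((α^k) x) := by
    intro j k x; rw [pow_add, Module.End.mul_apply]
  have powsucc : ∀ (k : ℕ) (x : A), (α^(k+1)) x = α ((α^k) x) := by
    intro k x; rw [pow_succ', Module.End.mul_apply]
  have powsucc2 : ∀ (k : ℕ) (x : A), (α^(k+1)) x = (α^k) (α x) := by
    intro k x; rw [pow_succ, Module.End.mul_apply]
  have powmul : ∀ (k : ℕ) (x y : A), (α^k) (μ x y) = μ ((α^k) x) ((α^k) y) := by
    intro k; induction k with
    | zero => intro x y; simp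
    | succ k ih => intro x y; rw [powsucc2, powsucc2, powsucc2, hmult, ih]
  have hGa : (fun i : Fin (n+1) => b (m+1+1+(i:ℕ))) = fun i : Fin (n+1) => b (m+1+(i:ℕ)+1) := by
    funext i; exact congrArg b (by omega)
  have hGb : (fun i : Fin (n+1) => b (m+1+((i:ℕ)+1))) = fun i : Fin (n+1) => b (m+1+(i:ℕ)+1) := by
    funext i; exact congrArg b (by omega)
  rw [show m+n+2 = (m+1)+(n+1) from by ring]
  rw [Fin.sum_univ_add]
  simp only [Fin.sum_univ_succ (n := n)]
  simp only [Fin.coe_castAdd, Fin.coe_natAdd, Fin.val_succ, Fin.val_zero, add_zero]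
  simp only [hGa, hGb]
  have e1 : μ ((α^n) (μ ((α^m) (b 0)) (f fun i : Fin (m+1) => b ((i:ℕ)+1))))
        ((α^(m+1)) (g fun i : Fin (n+1) => b (m+1+(i:ℕ)+1)))
      = μ ((α^(m+n+1)) (b 0))
        (μ ((α^n) (f fun i : Fin (m+1) => b ((i:ℕ)+1)))
          ((α^m) (g fun i : Fin (n+1) => b (m+1+(i:ℕ)+1)))) := by
    rw [powmul, ← powadd, show n+m = m+n from by ring,
      powsucc m (g fun i : Fin (n+1) => b (m+1+(i:ℕ)+1)), ← hassoc, ← powsucc]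
  have e2 : (∑ x : Fin (m+1), ((-1:ℤ))^((x:ℕ)+1) •
        μ ((α^n) (f fun j : Fin (m+1) =>
            if (j:ℕ) < (x:ℕ) then α (b (j:ℕ))
            else if (j:ℕ) = (x:ℕ) then μ (b (j:ℕ)) (b ((j:ℕ)+1)) else α (b ((j:ℕ)+1))))
          ((α^(m+1)) (g fun i : Fin (n+1) => b (m+1+(i:ℕ)+1))))
      = ∑ x : Fin (m+1), ((-1:ℤ))^((x:ℕ)+1) •
        μ ((α^n) (f fun i : Fin (m+1) =>
            if (i:ℕ) < (x:ℕ) then α (b (i:ℕ))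
            else if (i:ℕ) = (x:ℕ) then μ (b (i:ℕ)) (b ((i:ℕ)+1)) else α (b ((i:ℕ)+1))))
          ((α^m) (g fun i : Fin (n+1) =>
            if m+1+(i:ℕ) < (x:ℕ) then α (b (m+1+(i:ℕ)))
            else if m+1+(i:ℕ) = (x:ℕ) then μ (b (m+1+(i:ℕ))) (b (m+1+(i:ℕ)+1))
            else α (b (m+1+(i:ℕ)+1)))) := by
    refine Finset.sum_congr rfl (fun x _ => ?_)
    have hx := x.isLt
    have hq : (fun i : Fin (n+1) =>
        if m+1+(i:ℕ) < (x:ℕ) then α (b (m+1+(i:ℕ)))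
        else if m+1+(i:ℕ) = (x:ℕ) then μ (b (m+1+(i:ℕ))) (b (m+1+(i:ℕ)+1))
        else α (b (m+1+(i:ℕ)+1)))
        = fun i : Fin (n+1) => α (b (m+1+(i:ℕ)+1)) := by
      funext i; rw [if_neg (by omega), if_neg (by omega)]
    rw [hq, show (g fun i : Fin (n+1) => α (b (m+1+(i:ℕ)+1)))
        = α (g fun i : Fin (n+1) => b (m+1+(i:ℕ)+1)) from (hg _).symm, ← powsucc2]
  have e3 : ((-1:ℤ)^(m+1) * (-1:ℤ)^(0+1)) •
        μ ((α^(n+1)) (f fun i : Fin (m+1) => b (i:ℕ)))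
          ((α^m) (g fun j : Fin (n+1) =>
            if (j:ℕ) < 0 then α (b (m+1+(j:ℕ)))
            else if (j:ℕ) = 0 then μ (b (m+1+(j:ℕ))) (b (m+1+((j:ℕ)+1)))
            else α (b (m+1+((j:ℕ)+1)))))
      = ((-1:ℤ))^(m+1+1) •
        μ ((α^n) (f fun i : Fin (m+1) =>
            if (i:ℕ) < m+1 then α (b (i:ℕ))
            else if (i:ℕ) = m+1 then μ (b (i:ℕ)) (b ((i:ℕ)+1)) else α (b ((i:ℕ)+1))))
          ((α^m) (g fun i : Fin (n+1) =>
            if m+1+(i:ℕ) < m+1 then α (b (m+1+(i:ℕ)))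
            else if m+1+(i:ℕ) = m+1 then μ (b (m+1+(i:ℕ))) (b (m+1+(i:ℕ)+1))
            else α (b (m+1+(i:ℕ)+1)))) := by
    have hA : (fun i : Fin (m+1) =>
        if (i:ℕ) < m+1 then α (b (i:ℕ))
        else if (i:ℕ) = m+1 then μ (b (i:ℕ)) (b ((i:ℕ)+1)) else α (b ((i:ℕ)+1)))
        = fun i : Fin (m+1) => α (b (i:ℕ)) := by
      funext i; rw [if_pos i.isLt]
    have hB : (fun i : Fin (n+1) =>
        if m+1+(i:ℕ) < m+1 then α (b (m+1+(i:ℕ)))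
        else if m+1+(i:ℕ) = m+1 then μ (b (m+1+(i:ℕ))) (b (m+1+(i:ℕ)+1))
        else α (b (m+1+(i:ℕ)+1)))
        = fun j : Fin (n+1) =>
          if (j:ℕ) < 0 then α (b (m+1+(j:ℕ)))
          else if (j:ℕ) = 0 then μ (b (m+1+(j:ℕ))) (b (m+1+((j:ℕ)+1)))
          else α (b (m+1+((j:ℕ)+1))) := by
      funext j; split_ifs <;>
        first
          | omega
          | exact congrArg (fun u => α (b u)) (by omega)
          | exact congrArg₂ (fun u v => μ (b u) (b v)) (by omega) (by omega)
    rw [hA, hB, show (f fun i : Fin (m+1) => α (b (i:ℕ)))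
        = α (f fun i : Fin (m+1) => b (i:ℕ)) from (hf _).symm, ← powsucc2,
      show ((-1:ℤ)^(m+1) * (-1:ℤ)^(0+1)) = (-1:ℤ)^(m+1+1) from by rw [← pow_add]]
  have e4 : (∑ x : Fin n, ((-1:ℤ)^(m+1) * (-1:ℤ)^((x:ℕ)+1+1)) •
        μ ((α^(n+1)) (f fun i : Fin (m+1) => b (i:ℕ)))
          ((α^m) (g fun j : Fin (n+1) =>
            if (j:ℕ) < (x:ℕ)+1 then α (b (m+1+(j:ℕ)))
            else if (j:ℕ) = (x:ℕ)+1 then μ (b (m+1+(j:ℕ))) (b (m+1+((j:ℕ)+1)))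
            else α (b (m+1+((j:ℕ)+1))))))
      = ∑ x : Fin n, ((-1:ℤ))^(m+1+((x:ℕ)+1)+1) •
        μ ((α^n) (f fun i : Fin (m+1) =>
            if (i:ℕ) < m+1+((x:ℕ)+1) then α (b (i:ℕ))
            else if (i:ℕ) = m+1+((x:ℕ)+1) then μ (b (i:ℕ)) (b ((i:ℕ)+1)) else α (b ((i:ℕ)+1))))
          ((α^m) (g fun i : Fin (n+1) =>
            if m+1+(i:ℕ) < m+1+((x:ℕ)+1) then α (b (m+1+(i:ℕ)))
            else if m+1+(i:ℕ) = m+1+((x:ℕ)+1) then μ (b (m+1+(i:ℕ))) (b (m+1+(i:ℕ)+1))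
            else α (b (m+1+(i:ℕ)+1)))) := by
    refine Finset.sum_congr rfl (fun x _ => ?_)
    have hA : (fun i : Fin (m+1) =>
        if (i:ℕ) < m+1+((x:ℕ)+1) then α (b (i:ℕ))
        else if (i:ℕ) = m+1+((x:ℕ)+1) then μ (b (i:ℕ)) (b ((i:ℕ)+1)) else α (b ((i:ℕ)+1)))
        = fun i : Fin (m+1) => α (b (i:ℕ)) := by
      funext i; rw [if_pos (by have := i.isLt; omega)]
    have hB : (fun i : Fin (n+1) =>
        if m+1+(i:ℕ) < m+1+((x:ℕ)+1) then α (b (m+1+(i:ℕ)))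
        else if m+1+(i:ℕ) = m+1+((x:ℕ)+1) then μ (b (m+1+(i:ℕ))) (b (m+1+(i:ℕ)+1))
        else α (b (m+1+(i:ℕ)+1)))
        = fun j : Fin (n+1) =>
          if (j:ℕ) < (x:ℕ)+1 then α (b (m+1+(j:ℕ)))
          else if (j:ℕ) = (x:ℕ)+1 then μ (b (m+1+(j:ℕ))) (b (m+1+((j:ℕ)+1)))
          else α (b (m+1+((j:ℕ)+1))) := by
      funext j; split_ifs <;>
        first
          | omega
          | exact congrArg (fun u => α (b u)) (by omega)
          | exact congrArg₂ (fun u v => μ (b u) (b v)) (by omega) (by omega)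
    rw [hA, hB, show (f fun i : Fin (m+1) => α (b (i:ℕ)))
        = α (f fun i : Fin (m+1) => b (i:ℕ)) from (hf _).symm, ← powsucc2,
      show ((-1:ℤ)^(m+1) * (-1:ℤ)^((x:ℕ)+1+1)) = (-1:ℤ)^(m+1+((x:ℕ)+1)+1) from by
        rw [← pow_add]; try congr 1; try omega]
  have e5 : ((-1:ℤ)^(m+1) * (-1:ℤ)^(n+1+1)) •
        μ ((α^(n+1)) (f fun i : Fin (m+1) => b (i:ℕ)))
          ((α^m) (μ (g fun i : Fin (n+1) => b (m+1+(i:ℕ))) ((α^n) (b (m+1+(n+1))))))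
      = ((-1:ℤ))^(m+1+(n+1)+1) •
        μ (μ ((α^n) (f fun i : Fin (m+1) => b (i:ℕ)))
            ((α^m) (g fun i : Fin (n+1) => b (m+1+(i:ℕ)))))
          ((α^(m+n+1)) (b (m+1+(n+1)))) := by
    rw [powmul m, ← powadd m n, powsucc n (f fun i : Fin (m+1) => b (i:ℕ)), hassoc,
      ← powsucc (m+n),
      show ((-1:ℤ)^(m+1) * (-1:ℤ)^(n+1+1)) = (-1:ℤ)^(m+1+(n+1)+1) from by
        rw [← pow_add]; try congr 1; try omega]
  have e6 : ((-1:ℤ))^(m+1+1) •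
        μ ((α^n) (μ (f fun i : Fin (m+1) => b (i:ℕ)) ((α^m) (b (m+1)))))
          ((α^(m+1)) (g fun i : Fin (n+1) => b (m+1+(i:ℕ)+1)))
      = -(((-1:ℤ))^(m+1) •
        μ ((α^(n+1)) (f fun i : Fin (m+1) => b (i:ℕ)))
          ((α^m) (μ ((α^n) (b (m+1))) (g fun i : Fin (n+1) => b (m+1+(i:ℕ)+1))))) := by
    rw [powmul n, ← powadd n m, show n+m = m+n from by ring,
      powsucc m (g fun i : Fin (n+1) => b (m+1+(i:ℕ)+1)),
      powmul m, ← powadd m n, powsucc n (f fun i : Fin (m+1) => b (i:ℕ)), hassoc,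
      pow_succ, mul_neg_one, neg_smul]
  rw [e1, e2]
  erw [e3]
  rw [e4, e5, e6]
  abel

/-- In a multiplicative hom-associative algebra, `δ_α` is a graded derivation of the
cup product: `δ_α(f ∪_α g) = (δ_α f) ∪_α g + (-1)^{m+1} f ∪_α (δ_α g)` for
`f ∈ C^{m+1}_α`, `g ∈ C^{n+1}_α`; consequently `∪_α` induces an associative product on
cohomology (in particular the cup product of cocycles is a cocycle). -/
theorem homDelta_cupProd_derivation
    {K : Type*} [Field K] [CharZero K] {A : Type*} [AddCommGroup A] [Module K A]
    (μ : A →ₗ[K] A →ₗ[K] A) (α : A →ₗ[K] A)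
    (hassoc : ∀ a b c : A, μ (α a) (μ b c) = μ (μ a b) (α c))
    (hmult : ∀ a b : A, α (μ a b) = μ (α a) (α b))
    (m n : ℕ)
    (f : MultilinearMap K (fun _ : Fin (m + 1) => A) A)
    (g : MultilinearMap K (fun _ : Fin (n + 1) => A) A)
    (hf : IsCompat (⇑α) (⇑f)) (hg : IsCompat (⇑α) (⇑g)) :
    (∀ a : Fin (m + n + 3) → A,
      homDelta (fun x y => μ x y) (⇑α) (m + n + 2)
          (cupProd (fun x y => μ x y) (⇑α) (⇑f) (⇑g)) a
        = cupProd (fun x y => μ x y) (⇑α)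
            (homDelta (fun x y => μ x y) (⇑α) (m + 1) (⇑f)) (⇑g)
            (reindex (by omega) a)
          + ((-1 : ℤ) ^ (m + 1)) •
              cupProd (fun x y => μ x y) (⇑α) (⇑f)
                (homDelta (fun x y => μ x y) (⇑α) (n + 1) (⇑g)) a) ∧
    ((∀ a, homDelta (fun x y => μ x y) (⇑α) (m + 1) (⇑f) a = 0) →
     (∀ a, homDelta (fun x y => μ x y) (⇑α) (n + 1) (⇑g) a = 0) →
     ∀ a, homDelta (fun x y => μ x y) (⇑α) (m + n + 2)
        (cupProd (fun x y => μ x y) (⇑α) (⇑f) (⇑g)) a = 0) := by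
  have key := keylemma μ α hassoc hmult m n f g hf hg
  refine ⟨key, ?_⟩
  intro h1 h2 a
  rw [key a]
  simp [cupProd, h1, h2, iterate_map_zero]
end

section
/- In a multiplicative hom-associative algebra, for any f ∈ C^m_α(A,A), g ∈ Cⁿ_α(A,A), h ∈ C^p_α(A,A): (f ∪_α g) ∘ h = (f ∘ h) ∪_α g + (-1)^{m(p-1)} f ∪_α (g ∘ h). -/
section Helpers
variable {K : Type*} [Field K] {A : Type*} [AddCommGroup A] [Module K A]

omit [AddCommGroup A] [Module K A] in
lemma my_iter_compat (α : A → A) {n : ℕ} {f : (Fin n → A) → A}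
    (hf : IsCompat α f) (k : ℕ) (a : Fin n → A) :
    α^[k] (f a) = f (fun i => α^[k] (a i)) := by
  induction k generalizing a with
  | zero => simp
  | succ k ih =>
      rw [Function.iterate_succ_apply', ih, hf]
      congr 1
      funext i
      exact (Function.iterate_succ_apply' α k (a i)).symm

omit [Module K A] in
lemma my_key_split (N₁ N₂ N : ℕ) (hN : N₁ + N₂ = N) (F : Fin N → A) :
    ∑ i : Fin N, F i
      = ∑ i : Fin N₁, F ⟨i, by omega⟩ + ∑ j : Fin N₂, F ⟨N₁ + j, by omega⟩ := by
  subst hN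
  rw [Fin.sum_univ_add]
  rfl

lemma my_push1 (μ : A →ₗ[K] A →ₗ[K] A) (α : A →ₗ[K] A) (k : ℕ) {ι : Type*} (s : Finset ι)
    (c : ι → ℤ) (x : ι → A) (y : A) :
    μ ((⇑α)^[k] (∑ i ∈ s, c i • x i)) y = ∑ i ∈ s, c i • μ ((⇑α)^[k] (x i)) y := by
  have hk : ∀ z : A, (⇑α)^[k] z = (α ^ k) z := fun z => (Module.End.pow_apply α k z).symm
  simp only [hk, map_sum, map_zsmul, LinearMap.sum_apply, LinearMap.smul_apply]

lemma my_push2 (μ : A →ₗ[K] A →ₗ[K] A) (α : A →ₗ[K] A) (k : ℕ) {ι : Type*} (s : Finset ι)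
    (c : ι → ℤ) (x : ι → A) (y : A) :
    μ y ((⇑α)^[k] (∑ i ∈ s, c i • x i)) = ∑ i ∈ s, c i • μ y ((⇑α)^[k] (x i)) := by
  have hk : ∀ z : A, (⇑α)^[k] z = (α ^ k) z := fun z => (Module.End.pow_apply α k z).symm
  simp only [hk, map_sum, map_zsmul]

lemma my_lemA (μ : A →ₗ[K] A →ₗ[K] A) (α : A →ₗ[K] A)
    (m n p : ℕ)
    (f : (Fin (m + 1) → A) → A) (g : (Fin (n + 1) → A) → A) (h : (Fin (p + 1) → A) → A)
    (hg : IsCompat (⇑α) g)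
    (j : ℕ) (hj : j < m + 1) (a : Fin (m + n + p + 2) → A) :
    circI (⇑α) (⟨j, by omega⟩ : Fin (m + n + 1 + 1))
        (cupProd (fun x y => μ x y) (⇑α) f g) h (reindex (by omega) a)
      = μ ((⇑α)^[n] (circI (⇑α) (⟨j, hj⟩ : Fin (m + 1)) f h
            (fun k : Fin (m + p + 1) => a ⟨k.val, by omega⟩)))
          ((⇑α)^[m + p] (g (fun l : Fin (n + 1) => a ⟨m + p + 1 + l.val, by omega⟩))) := by
  simp only [circI, cupProd, reindex, Fin.cast]
  rw [Function.iterate_add_apply]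
  congr 1
  rw [my_iter_compat (⇑α) hg p]
  refine congrArg (⇑α)^[m] (congrArg g (funext fun l => ?_))
  rw [if_neg (by omega), if_neg (by omega)]
  exact congrArg (⇑α)^[p] (congrArg a (Fin.mk_eq_mk.mpr (by omega)))

lemma my_lemB (μ : A →ₗ[K] A →ₗ[K] A) (α : A →ₗ[K] A)
    (m n p : ℕ)
    (f : (Fin (m + 1) → A) → A) (g : (Fin (n + 1) → A) → A) (h : (Fin (p + 1) → A) → A)
    (hf : IsCompat (⇑α) f)
    (j : ℕ) (hj : j < n + 1) (a : Fin (m + n + p + 2) → A) :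
    circI (⇑α) (⟨m + 1 + j, by omega⟩ : Fin (m + n + 1 + 1))
        (cupProd (fun x y => μ x y) (⇑α) f g) h (reindex (by omega) a)
      = μ ((⇑α)^[n + p] (f (fun s : Fin (m + 1) => a ⟨s.val, by omega⟩)))
          ((⇑α)^[m] (circI (⇑α) (⟨j, hj⟩ : Fin (n + 1)) g h
            (fun l : Fin (n + p + 1) => a ⟨m + 1 + l.val, by omega⟩))) := by
  simp only [circI, cupProd, reindex, Fin.cast]
  rw [Function.iterate_add_apply]
  congr 1
  · rw [my_iter_compat (⇑α) hf p]
    refine congrArg ⇑μ (congrArg (⇑α)^[n] (congrArg f (funext fun s => ?_)))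
    rw [if_pos (by omega)]
  · refine congrArg (⇑α)^[m] (congrArg g (funext fun l => ?_))
    by_cases h1 : (l : ℕ) < j
    · rw [if_pos (by omega), if_pos h1]
    · by_cases h2 : (l : ℕ) = j
      · rw [if_neg (by omega), if_pos (by omega), if_neg (by omega), if_pos h2]
        refine congrArg h (funext fun r => ?_)
        exact congrArg a (Fin.mk_eq_mk.mpr (by omega))
      · rw [if_neg (by omega), if_neg (by omega), if_neg (by omega), if_neg h2]
        exact congrArg (⇑α)^[p] (congrArg a (Fin.mk_eq_mk.mpr (by omega)))

end Helpers

/-- In a multiplicative hom-associative algebra, for `f ∈ C^{m+1}_α`, `g ∈ C^{n+1}_α`,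
`h ∈ C^{p+1}_α`: `(f ∪_α g) ∘ h = (f ∘ h) ∪_α g + (-1)^{(m+1)p} f ∪_α (g ∘ h)`. -/
theorem cupProd_circ_distrib
    {K : Type*} [Field K] [CharZero K] {A : Type*} [AddCommGroup A] [Module K A]
    (μ : A →ₗ[K] A →ₗ[K] A) (α : A →ₗ[K] A)
    (hassoc : ∀ a b c : A, μ (α a) (μ b c) = μ (μ a b) (α c))
    (hmult : ∀ a b : A, α (μ a b) = μ (α a) (α b))
    (m n p : ℕ)
    (f : MultilinearMap K (fun _ : Fin (m + 1) => A) A)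
    (g : MultilinearMap K (fun _ : Fin (n + 1) => A) A)
    (h : MultilinearMap K (fun _ : Fin (p + 1) => A) A)
    (hf : IsCompat (⇑α) (⇑f)) (hg : IsCompat (⇑α) (⇑g)) (hh : IsCompat (⇑α) (⇑h)) :
    ∀ a : Fin (m + n + p + 2) → A,
      vcirc (⇑α) (cupProd (fun x y => μ x y) (⇑α) (⇑f) (⇑g)) (⇑h)
          (reindex (by omega) a)
        = cupProd (fun x y => μ x y) (⇑α) (vcirc (⇑α) (⇑f) (⇑h)) (⇑g)
            (reindex (by omega) a)
          + ((-1 : ℤ) ^ ((m + 1) * p)) •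
              cupProd (fun x y => μ x y) (⇑α) (⇑f) (vcirc (⇑α) (⇑g) (⇑h))
                (reindex (by omega) a) := by
  intro a
  have e1 : cupProd (fun x y => μ x y) (⇑α) (vcirc (⇑α) (⇑f) (⇑h)) (⇑g)
        (reindex (by omega) a)
      = ∑ i : Fin (m + 1), ((-1 : ℤ) ^ (p * (i : ℕ))) •
          μ ((⇑α)^[n] (circI (⇑α) i (⇑f) (⇑h)
              (fun k : Fin (m + p + 1) => a ⟨k.val, by omega⟩)))
            ((⇑α)^[m + p] (g (fun l : Fin (n + 1) => a ⟨m + p + 1 + l.val, by omega⟩))) := by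
    simp only [cupProd, vcirc]
    exact my_push1 μ α n Finset.univ _ _ _
  have e2 : ((-1 : ℤ) ^ ((m + 1) * p)) •
        cupProd (fun x y => μ x y) (⇑α) (⇑f) (vcirc (⇑α) (⇑g) (⇑h))
          (reindex (by omega) a)
      = ∑ j : Fin (n + 1), ((-1 : ℤ) ^ (p * (m + 1 + (j : ℕ)))) •
          μ ((⇑α)^[n + p] (f (fun s : Fin (m + 1) => a ⟨s.val, by omega⟩)))
            ((⇑α)^[m] (circI (⇑α) j (⇑g) (⇑h)
              (fun l : Fin (n + p + 1) => a ⟨m + 1 + l.val, by omega⟩))) := by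
    simp only [cupProd, vcirc]
    rw [my_push2 μ α m Finset.univ _ _ _, Finset.smul_sum]
    refine Finset.sum_congr rfl fun j _ => ?_
    rw [smul_smul, ← pow_add]
    congr 2
    ring
  rw [e1, e2]
  simp only [vcirc]
  rw [my_key_split (m + 1) (n + 1) (m + n + 1 + 1) (by omega)]
  congr 1
  · refine Finset.sum_congr rfl fun i _ => ?_
    exact congrArg (fun z => ((-1 : ℤ) ^ (p * (i : ℕ))) • z)
      (my_lemA μ α m n p (⇑f) (⇑g) (⇑h) hg i.val i.isLt a)
  · refine Finset.sum_congr rfl fun j _ => ?_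
    exact congrArg (fun z => ((-1 : ℤ) ^ (p * (m + 1 + (j : ℕ)))) • z)
      (my_lemB μ α m n p (⇑f) (⇑g) (⇑h) hf j.val j.isLt a)
end
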